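/- arXiv:2504.02601 — 5 statements merged into one kernel-verified Lean document; each statement's English description precedes it below -/
import Mathlib

section
/- If the projective dimension of R_S as an R-module is at most 1, then the projective dimension of every S-strongly flat R-module is at most 1. -/
open CategoryTheory

noncomputable def ext1Zero (R : Type) [CommRing R] (M N : Type) [AddCommGroup M] [Module R M]
    [AddCommGroup N] [Module R N] : Prop :=
  Subsingleton (((Ext R (ModuleCat R) 1).obj (Opposite.op (ModuleCat.of R M))).obj
    (ModuleCat.of R N))

/-- An `R`-module `C` is `S`-weakly cotorsion if `Ext¹_R(R_S, C) = 0`. -/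
noncomputable def SWeaklyCotorsion (R : Type) [CommRing R] (S : Submonoid R) (C : Type)
    [AddCommGroup C] [Module R C] : Prop :=
  ext1Zero R (Localization S) C

/-- An `R`-module `F` is `S`-strongly flat if `Ext¹_R(F, C) = 0` for every
`S`-weakly cotorsion `R`-module `C`. -/
noncomputable def SStronglyFlat (R : Type) [CommRing R] (S : Submonoid R) (F : Type)
    [AddCommGroup F] [Module R F] : Prop :=
  ∀ (C : Type) [AddCommGroup C] [Module R C], SWeaklyCotorsion R S C → ext1Zero R F C

/-- `pdLeOne R M` says that the projective dimension of `M` over `R` is at most `1`,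
i.e. there is a short exact sequence `0 → P₁ → P₀ → M → 0` with `P₀, P₁` projective. -/
def pdLeOne (R : Type) [CommRing R] (M : Type) [AddCommGroup M] [Module R M] : Prop :=
  ∃ (P₀ P₁ : ModuleCat R) (f : P₁ ⟶ P₀) (g : P₀ ⟶ ModuleCat.of R M),
    Projective P₀ ∧ Projective P₁ ∧
    Function.Injective f ∧ Function.Surjective g ∧ LinearMap.range f.hom = LinearMap.ker g.hom

open Limits

variable {R : Type} [CommRing R]

lemma subsingleton_iff_isZero (X : ModuleCat R) : Subsingleton X ↔ IsZero X := by
  constructor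
  · intro h; exact ModuleCat.isZero_of_subsingleton X
  · intro h
    have hz : (𝟙 X : X ⟶ X) = 0 := h.eq_of_src _ _
    refine ⟨fun a b => ?_⟩
    have ha : (𝟙 X : X ⟶ X) a = (0 : X ⟶ X) a := by rw [hz]
    have hb : (𝟙 X : X ⟶ X) b = (0 : X ⟶ X) b := by rw [hz]
    calc a = (𝟙 X : X ⟶ X) a := rfl
    _ = (0 : X ⟶ X) a := ha
    _ = (0 : X ⟶ X) b := rfl
    _ = (𝟙 X : X ⟶ X) b := hb.symm
    _ = b := rfl

lemma ext1_subsingleton_iff (M Y : ModuleCat R) (P : ProjectiveResolution M) :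
    Subsingleton (((Ext R (ModuleCat R) 1).obj (Opposite.op M)).obj Y) ↔
      ∀ (φ : P.complex.X 1 ⟶ Y), P.complex.d 2 1 ≫ φ = 0 →
        ∃ ψ : P.complex.X 0 ⟶ Y, P.complex.d 1 0 ≫ ψ = φ := by
  have e := (P.isoExt 1 Y (R := R)).toLinearEquiv
  rw [e.toEquiv.subsingleton_congr, subsingleton_iff_isZero,
    ← HomologicalComplex.exactAt_iff_isZero_homology,
    HomologicalComplex.exactAt_iff' _ 0 1 2 (by simp) (by simp),
    ShortComplex.moduleCat_exact_iff]
  constructor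
  · intro H φ hφ
    obtain ⟨ψ, hψ⟩ := H φ (by
      show (Linear.leftComp R Y (P.complex.d 2 1)) φ = 0
      simpa using hφ)
    exact ⟨ψ, hψ⟩
  · rintro H (φ : P.complex.X 1 ⟶ Y) hφ
    obtain ⟨ψ, hψ⟩ := H φ (by
      have : (Linear.leftComp R Y (P.complex.d 2 1)) φ = 0 := hφ
      simpa using this)
    exact ⟨ψ, hψ⟩
universe u
variable {R : Type} [CommRing R]

/-- Factor a linear map through a surjection. -/
lemma exists_comp_eq_of_surjective {A B C : Type} [AddCommGroup A] [Module R A]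
    [AddCommGroup B] [Module R B] [AddCommGroup C] [Module R C]
    (q : A →ₗ[R] B) (u : A →ₗ[R] C) (hq : Function.Surjective q)
    (h : LinearMap.ker q ≤ LinearMap.ker u) :
    ∃ v : B →ₗ[R] C, v ∘ₗ q = u := by
  let e0 : (A ⧸ LinearMap.ker q) →ₗ[R] B := (LinearMap.ker q).liftQ q le_rfl
  have he0 : Function.Bijective e0 := by
    constructor
    · rw [← LinearMap.ker_eq_bot]
      exact Submodule.ker_liftQ_eq_bot _ _ _ le_rfl
    · intro b
      obtain ⟨a, rfl⟩ := hq b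
      exact ⟨Submodule.Quotient.mk a, rfl⟩
  let e : (A ⧸ LinearMap.ker q) ≃ₗ[R] B := LinearEquiv.ofBijective e0 he0
  refine ⟨((LinearMap.ker q).liftQ u h) ∘ₗ (e.symm : B →ₗ[R] (A ⧸ LinearMap.ker q)), ?_⟩
  ext a
  have : e.symm (q a) = Submodule.Quotient.mk a := by
    apply e.injective
    simp only [LinearEquiv.apply_symm_apply]
    rfl
  simp [this]

/-- Factor a linear map through an injection, given a range condition. -/
lemma exists_comp_eq_of_injective {A B C : Type} [AddCommGroup A] [Module R A]
    [AddCommGroup B] [Module R B] [AddCommGroup C] [Module R C]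
    (i : A →ₗ[R] B) (u : C →ₗ[R] B) (hi : Function.Injective i)
    (h : LinearMap.range u ≤ LinearMap.range i) :
    ∃ v : C →ₗ[R] A, i ∘ₗ v = u := by
  let e : A ≃ₗ[R] LinearMap.range i := LinearEquiv.ofInjective i hi
  refine ⟨(e.symm : LinearMap.range i →ₗ[R] A) ∘ₗ
    u.codRestrict (LinearMap.range i) (fun c => h (LinearMap.mem_range_self u c)), ?_⟩
  ext c
  have : ∀ x : LinearMap.range i, i (e.symm x) = (x : B) := by
    intro x
    conv_rhs => rw [← e.apply_symm_apply x]
    rfl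
  simp [this]

lemma split_of_ext1_subsingleton {M A B : ModuleCat R} (i : A ⟶ B) (p : B ⟶ M)
    (hi : Function.Injective i) (hp : Function.Surjective p)
    (hip : LinearMap.range i.hom = LinearMap.ker p.hom)
    (h : Subsingleton (((Ext R (ModuleCat R) 1).obj (Opposite.op M)).obj A)) :
    ∃ s : M ⟶ B, s ≫ p = 𝟙 M := by
  have hpE : Epi p := (ModuleCat.epi_iff_surjective p).2 hp
  let P := ProjectiveResolution.of M
  rw [ext1_subsingleton_iff M A P] at h
  let lam : P.complex.X 0 ⟶ B := @Projective.factorThru _ _ _ _ _ _ (P.π.f 0) p hpE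
  have hlam : lam ≫ p = P.π.f 0 := Projective.factorThru_comp _ _
  have hip' : i ≫ p = 0 := by
    ext a
    have : i a ∈ LinearMap.ker p.hom := hip ▸ LinearMap.mem_range_self i.hom a
    exact this
  -- the cocycle
  obtain ⟨φ, hφ⟩ := exists_comp_eq_of_injective i.hom
      ((P.complex.d 1 0 ≫ lam : P.complex.X 1 ⟶ B).hom) hi (by
    rintro b ⟨x, rfl⟩
    rw [hip]
    have : p ((P.complex.d 1 0 ≫ lam) x) = (P.complex.d 1 0 ≫ lam ≫ p) x := rfl
    have h2 : (P.complex.d 1 0 ≫ lam ≫ p) x = 0 := by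
      rw [hlam]
      exact ConcreteCategory.congr_hom P.complex_d_comp_π_f_zero x
    exact LinearMap.mem_ker.2 (this.trans h2))
  have hφ' : (ModuleCat.ofHom φ : P.complex.X 1 ⟶ A) ≫ i = P.complex.d 1 0 ≫ lam :=
    ModuleCat.hom_ext hφ
  have hiM : Mono i := (ModuleCat.mono_iff_injective i).2 hi
  obtain ⟨ψ, hψ⟩ := h (ModuleCat.ofHom φ) (by
    rw [← cancel_mono i, Category.assoc, hφ', ← Category.assoc,
      HomologicalComplex.d_comp_d, zero_comp, zero_comp])
  set lam' : P.complex.X 0 ⟶ B := lam - ψ ≫ i with hlam'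
  have h1 : P.complex.d 1 0 ≫ lam' = 0 := by
    rw [hlam', Preadditive.comp_sub, ← Category.assoc, hψ, hφ', sub_self]
  have h2 : lam' ≫ p = P.π.f 0 := by
    rw [hlam', Preadditive.sub_comp, Category.assoc, hip', comp_zero, sub_zero, hlam]
  have hπ0 : Function.Surjective (P.π.f 0) :=
    (ModuleCat.epi_iff_surjective _).1 inferInstance
  obtain ⟨s, hs⟩ := exists_comp_eq_of_surjective
      ((P.π.f 0 : P.complex.X 0 ⟶ M).hom) (lam'.hom) hπ0 (by
    intro x hx
    obtain ⟨y, hy⟩ := (ShortComplex.moduleCat_exact_iff _).1 P.exact₀ x hx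
    show lam' x = 0
    rw [← hy]
    exact ConcreteCategory.congr_hom h1 y)
  refine ⟨ModuleCat.ofHom s, ?_⟩
  ext m
  obtain ⟨x, rfl⟩ := hπ0 m
  have e1 : s ((P.π.f 0) x) = lam' x := LinearMap.congr_fun hs x
  have e2 := ConcreteCategory.congr_hom h2 x
  exact (congrArg p.hom e1).trans e2

/-- From a section of the projection, get a retraction of the inclusion. -/
lemma retraction_of_section {A B M : Type} [AddCommGroup A] [Module R A]
    [AddCommGroup B] [Module R B] [AddCommGroup M] [Module R M]
    (i : A →ₗ[R] B) (p : B →ₗ[R] M) (hi : Function.Injective i)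
    (hip : LinearMap.range i = LinearMap.ker p)
    (s : M →ₗ[R] B) (hs : p ∘ₗ s = LinearMap.id) :
    ∃ r : B →ₗ[R] A, r ∘ₗ i = LinearMap.id := by
  obtain ⟨r, hr⟩ := exists_comp_eq_of_injective i ((LinearMap.id : B →ₗ[R] B) - s ∘ₗ p) hi (by
    rintro b ⟨x, rfl⟩
    rw [hip]
    show p (x - s (p x)) = 0
    rw [map_sub]
    have : p (s (p x)) = p x := LinearMap.congr_fun hs (p x)
    rw [this, sub_self])
  refine ⟨r, ?_⟩
  ext a
  apply hi
  have : i (r (i a)) = ((LinearMap.id : B →ₗ[R] B) - s ∘ₗ p) (i a) := LinearMap.congr_fun hr (i a)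
  show i (r (i a)) = i a
  rw [this]
  show i a - s (p (i a)) = i a
  have hpa : p (i a) = 0 := by
    have : i a ∈ LinearMap.ker p := hip ▸ LinearMap.mem_range_self i a
    exact this
  rw [hpa, map_zero, sub_zero]
variable {R : Type} [CommRing R]

noncomputable def twoTermComplex (P₀ P₁ : ModuleCat R) (f : P₁ ⟶ P₀) :
    ChainComplex (ModuleCat R) ℕ :=
  ChainComplex.of
    (fun n => match n with | 0 => P₀ | 1 => P₁ | _+2 => ModuleCat.of R PUnit)
    (fun n => match n with | 0 => f | _+1 => 0)
    (fun n => match n with | 0 => by simp | _+1 => by simp)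

lemma twoTermComplex_d_1_0 (P₀ P₁ : ModuleCat R) (f : P₁ ⟶ P₀) :
    (twoTermComplex P₀ P₁ f).d 1 0 = f :=
  by simp [twoTermComplex, ChainComplex.of.d]

lemma twoTermComplex_d_2_1 (P₀ P₁ : ModuleCat R) (f : P₁ ⟶ P₀) :
    (twoTermComplex P₀ P₁ f).d 2 1 = 0 :=
  by simp [twoTermComplex, ChainComplex.of.d]; rfl

noncomputable def twoTermResolution {M : ModuleCat R} (P₀ P₁ : ModuleCat R) (f : P₁ ⟶ P₀)
    (g : P₀ ⟶ M) (h₀ : Projective P₀) (h₁ : Projective P₁) (hf : Function.Injective f)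
    (hg : Function.Surjective g) (hfg : LinearMap.range f.hom = LinearMap.ker g.hom) :
    ProjectiveResolution M where
  complex := twoTermComplex P₀ P₁ f
  projective n := match n with
    | 0 => h₀
    | 1 => h₁
    | _+2 => ((@ModuleCat.isZero_of_subsingleton R _ (ModuleCat.of R PUnit)
        (inferInstanceAs (Subsingleton PUnit)))).projective
  π := (ChainComplex.toSingle₀Equiv _ _).symm ⟨g, by
      rw [twoTermComplex_d_1_0]
      ext x
      have hx : f x ∈ LinearMap.ker g.hom := hfg ▸ LinearMap.mem_range_self f.hom x
      exact hx⟩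
  quasiIso := ⟨fun n => by
    have hzero : ∀ k : ℕ, IsZero ((twoTermComplex P₀ P₁ f).X (k+2)) := fun k =>
      @ModuleCat.isZero_of_subsingleton R _ (ModuleCat.of R PUnit)
        (inferInstanceAs (Subsingleton PUnit))
    cases n with
    | zero =>
      rw [ChainComplex.quasiIsoAt₀_iff, ShortComplex.quasiIso_iff_of_zeros' _ rfl rfl rfl]
      have w : f ≫ g = 0 := by
        ext x
        have hx : f x ∈ LinearMap.ker g.hom := hfg ▸ LinearMap.mem_range_self f.hom x
        exact hx
      have hex : (ShortComplex.mk f g w).Exact ∧ Epi (ShortComplex.mk f g w).g := by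
        constructor
        · rw [ShortComplex.moduleCat_exact_iff]
          intro x hx
          have : x ∈ LinearMap.ker g.hom := hx
          rw [← hfg] at this
          exact this
        · exact (ModuleCat.epi_iff_surjective g).2 hg
      refine (ShortComplex.exact_and_epi_g_iff_of_iso ?_).2 hex
      exact ShortComplex.isoMk (Iso.refl _) (Iso.refl _) (Iso.refl _)
        (by exact (Category.id_comp f).trans (Category.comp_id f).symm)
        (by exact (Category.id_comp g).trans (Category.comp_id g).symm)
    | succ n =>
      rw [quasiIsoAt_iff_exactAt']
      swap
      · apply ChainComplex.exactAt_succ_single_obj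
      cases n with
      | zero =>
        rw [HomologicalComplex.exactAt_iff' _ 2 1 0 (by simp) (by simp),
          ShortComplex.moduleCat_exact_iff]
        intro x hx
        have hx' : f x = 0 := by
          rw [← twoTermComplex_d_1_0 (f := f)]; exact hx
        refine ⟨0, ?_⟩
        have : x = 0 := hf (by rw [hx']; exact (map_zero (ConcreteCategory.hom f)).symm)
        simp [this]
      | succ n =>
        rw [HomologicalComplex.exactAt_iff]
        exact ShortComplex.exact_of_isZero_X₂ _ (hzero n)⟩

lemma sWeaklyCotorsion_of_quotient (S : Submonoid R)
    (hpd : pdLeOne R (Localization S)) (I : ModuleCat R) (hInj : Injective I)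
    (V : Submodule R I) : SWeaklyCotorsion R S (↑I ⧸ V) := by
  obtain ⟨P₀, P₁, f, g, ⟨h₀, h₁, hf, hg, hfg⟩⟩ := hpd
  have hfM : Mono f := (ModuleCat.mono_iff_injective f).2 hf
  let P := twoTermResolution P₀ P₁ f g h₀ h₁ hf hg hfg
  show Subsingleton _
  rw [ext1_subsingleton_iff _ _ P]
  intro φ _
  let C' : ModuleCat R := ModuleCat.of R (↑I ⧸ V)
  let πV : I ⟶ C' := ModuleCat.ofHom V.mkQ
  have hπV : Epi πV := (ModuleCat.epi_iff_surjective _).2 (Submodule.mkQ_surjective V)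
  have h₁' : Projective P₁ := h₁
  let φ' : P₁ ⟶ I := Projective.factorThru (φ : P₁ ⟶ C') πV
  have hφ' : φ' ≫ πV = φ := Projective.factorThru_comp _ _
  refine ⟨(Injective.factorThru φ' f : P₀ ⟶ I) ≫ πV, ?_⟩
  have hd : (P.complex.d 1 0 : P₁ ⟶ P₀) = f := twoTermComplex_d_1_0 P₀ P₁ f
  have key : f ≫ (Injective.factorThru φ' f : P₀ ⟶ I) ≫ πV = φ := by
    rw [← Category.assoc, Injective.comp_factorThru, hφ']
  exact (congrArg (fun a : P₁ ⟶ P₀ => a ≫ (Injective.factorThru φ' f : P₀ ⟶ I) ≫ πV) hd).trans key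

theorem stmt_6 (R : Type) [CommRing R] (S : Submonoid R)
    (hpd : pdLeOne R (Localization S))
    (F : Type) [AddCommGroup F] [Module R F] (hF : SStronglyFlat R S F) :
    pdLeOne R F := by
  classical
  let FM : ModuleCat R := ModuleCat.of R F
  -- projective cover of F
  let P : ModuleCat R := Projective.over FM
  let p : P ⟶ FM := Projective.π FM
  have hp : Function.Surjective p := (ModuleCat.epi_iff_surjective p).1 inferInstance
  let K : ModuleCat R := ModuleCat.of R ↥(LinearMap.ker p.hom)
  let i : K ⟶ P := ModuleCat.ofHom (LinearMap.ker p.hom).subtype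
  have hi : Function.Injective i := Submodule.injective_subtype _
  -- projective cover of K
  let Q : ModuleCat R := Projective.over K
  let q : Q ⟶ K := Projective.π K
  have hq : Function.Surjective q := (ModuleCat.epi_iff_surjective q).1 inferInstance
  let NM : ModuleCat R := ModuleCat.of R ↥(LinearMap.ker q.hom)
  let ιN : NM ⟶ Q := ModuleCat.ofHom (LinearMap.ker q.hom).subtype
  have hιN : Function.Injective ιN := Submodule.injective_subtype _
  have hιNM : Mono ιN := (ModuleCat.mono_iff_injective _).2 hιN
  -- injective envelope of N
  let I : ModuleCat R := Injective.under NM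
  let ν : NM ⟶ I := Injective.ι NM
  have hν : Function.Injective ν := (ModuleCat.mono_iff_injective ν).1 inferInstance
  let C'ty := (↑I ⧸ LinearMap.range ν.hom)
  let C' : ModuleCat R := ModuleCat.of R C'ty
  let πI : I ⟶ C' := ModuleCat.ofHom (LinearMap.range ν.hom).mkQ
  have hπI : Function.Surjective πI := Submodule.mkQ_surjective _
  have hπIE : Epi πI := (ModuleCat.epi_iff_surjective πI).2 hπI
  -- extend ν along ιN
  let ξ : Q ⟶ I := Injective.factorThru ν ιN
  have hξ : ιN ≫ ξ = ν := Injective.comp_factorThru _ _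
  -- κ : K ⟶ C' with κ ∘ q = πI ∘ ξ
  obtain ⟨κ, hκ⟩ := exists_comp_eq_of_surjective (C := C'ty) q.hom
      ((ξ ≫ πI : Q ⟶ C').hom) hq (by
    intro x hx
    show πI (ξ x) = 0
    have hx' : (x : Q) = ιN ⟨x, hx⟩ := rfl
    rw [hx']
    have h1 : ξ (ιN ⟨x, hx⟩) = ν ⟨x, hx⟩ := ConcreteCategory.congr_hom hξ _
    rw [h1]
    exact (Submodule.Quotient.mk_eq_zero _).2 (LinearMap.mem_range_self _ _))
  have hκ' : ∀ x : Q, κ (q x) = πI (ξ x) := fun x => LinearMap.congr_fun hκ x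
  -- C' is weakly cotorsion, so Ext¹(F, C') = 0
  have hWC : SWeaklyCotorsion R S C'ty :=
    sWeaklyCotorsion_of_quotient S hpd I inferInstance _
  have hExt : Subsingleton (((Ext R (ModuleCat R) 1).obj (Opposite.op FM)).obj C') :=
    hF C'ty hWC
  -- pushout of 0 → K → P → F → 0 along κ
  let w : K →ₗ[R] C'ty × ↑P := LinearMap.prod κ (-(i.hom))
  let Wsub : Submodule R (C'ty × ↑P) := LinearMap.range w
  let Bty := (C'ty × ↑P) ⧸ Wsub
  let B : ModuleCat R := ModuleCat.of R Bty
  let mkB : (C'ty × ↑P) →ₗ[R] Bty := Wsub.mkQ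
  let j : C' ⟶ B := ModuleCat.ofHom (mkB ∘ₗ LinearMap.inl R C'ty ↑P)
  have hπBaux : Wsub ≤ LinearMap.ker (p.hom ∘ₗ LinearMap.snd R C'ty ↑P) := by
    rintro _ ⟨k, rfl⟩
    show p (-(i k)) = 0
    rw [map_neg]
    have hk : p (i k) = 0 := k.2
    rw [hk, neg_zero]
  let πB : B ⟶ FM := ModuleCat.ofHom (Wsub.liftQ _ hπBaux)
  have hπBmk : ∀ c x, πB (mkB (c, x)) = p x := fun c x => rfl
  have hj : Function.Injective j := by
    rw [← LinearMap.ker_eq_bot, Submodule.eq_bot_iff]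
    intro c hc
    have hmem : ((c, (0 : ↑P)) : C'ty × ↑P) ∈ Wsub :=
      (Submodule.Quotient.mk_eq_zero _).1 (LinearMap.mem_ker.1 hc)
    obtain ⟨k, hk⟩ := hmem
    have hk1 : κ k = c := congrArg Prod.fst hk
    have hk2 : -(i k) = 0 := congrArg Prod.snd hk
    have hik : i k = 0 := by rw [← neg_neg (i k), hk2, neg_zero]
    have hk0 : k = 0 := hi (by rw [hik, map_zero])
    rw [← hk1, hk0, map_zero]
  have hπB : Function.Surjective πB := by
    intro y
    obtain ⟨x, hx⟩ := hp y
    exact ⟨mkB (0, x), hx⟩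
  have hrange : LinearMap.range j.hom = LinearMap.ker πB.hom := by
    apply le_antisymm
    · rintro _ ⟨c, rfl⟩
      show πB (mkB (c, 0)) = 0
      rw [hπBmk, map_zero]
    · intro b hb
      obtain ⟨⟨c, x⟩, rfl⟩ := Submodule.mkQ_surjective Wsub b
      have hx : p x = 0 := hb
      let k : ↥(LinearMap.ker p.hom) := ⟨x, hx⟩
      refine ⟨c + κ k, ?_⟩
      show mkB (c + κ k, 0) = mkB (c, x)
      refine (Submodule.Quotient.eq _).2 ⟨k, ?_⟩
      have hik : i k = x := rfl
      show (κ k, -(i k)) = (c + κ k, (0 : ↑P)) - (c, x)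
      rw [Prod.mk_sub_mk, hik]
      refine Prod.ext ?_ ?_
      · show κ k = c + κ k - c
        abel
      · show -x = 0 - x
        rw [zero_sub]
  -- split the pushout sequence using strong flatness
  obtain ⟨s, hs⟩ := split_of_ext1_subsingleton j πB hj hπB hrange hExt
  obtain ⟨r, hr⟩ := retraction_of_section (A := C'ty) (B := Bty) (M := F)
      j.hom πB.hom hj hrange s.hom (congrArg ModuleCat.Hom.hom hs)
  let h : ↑P →ₗ[R] C'ty := r ∘ₗ (mkB ∘ₗ LinearMap.inr R C'ty ↑P)
  have hh : ∀ k : ↑K, h (i k) = κ k := by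
    intro k
    have e1 : mkB (0, i k) = j (κ k) := by
      refine (Submodule.Quotient.eq _).2 ⟨-k, ?_⟩
      show (κ (-k), -(i (-k))) = ((0 : C'ty), i k) - (κ k, (0 : ↑P))
      rw [Prod.mk_sub_mk, map_neg, map_neg, neg_neg]
      refine Prod.ext ?_ ?_
      · show -κ k = 0 - κ k
        rw [zero_sub]
      · show i k = i k - 0
        rw [sub_zero]
    show r (mkB (0, i k)) = κ k
    rw [e1]
    exact LinearMap.congr_fun hr (κ k)
  let H : P ⟶ I := Projective.factorThru (ModuleCat.ofHom h : P ⟶ C') πI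
  have hH : H ≫ πI = (ModuleCat.ofHom h : P ⟶ C') := Projective.factorThru_comp _ _
  let θ : ↑Q →ₗ[R] ↑I :=
    ξ.hom - (H.hom ∘ₗ i.hom ∘ₗ q.hom)
  have hθν : ∀ x : ↑Q, θ x ∈ LinearMap.range ν.hom := by
    intro x
    have h2 := ConcreteCategory.congr_hom hH (i (q x))
    have hπIθ : πI (θ x) = 0 := by
      show πI (ξ x - H (i (q x))) = 0
      rw [map_sub]
      have h1 : πI (ξ x) = κ (q x) := (hκ' x).symm
      rw [h1, show πI (H (i (q x))) = h (i (q x)) from h2, hh, sub_self]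
    have hker := Submodule.ker_mkQ (LinearMap.range ν.hom)
    rw [← hker]
    exact LinearMap.mem_ker.2 hπIθ
  obtain ⟨τ, hτ⟩ := exists_comp_eq_of_injective ν.hom θ hν
      (by rintro _ ⟨x, rfl⟩; exact hθν x)
  have hτid : ∀ n : ↑NM, τ (ιN n) = n := by
    intro n
    apply hν
    have h1 : ν (τ (ιN n)) = θ (ιN n) := LinearMap.congr_fun hτ (ιN n)
    rw [h1]
    show ξ (ιN n) - H (i (q (ιN n))) = ν n
    have h2 : q (ιN n) = 0 := n.2
    rw [h2, map_zero, map_zero, sub_zero]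
    exact ConcreteCategory.congr_hom hξ n
  let σ : ↑Q →ₗ[R] ↑Q := LinearMap.id - ιN.hom ∘ₗ τ
  obtain ⟨s', hs'⟩ := exists_comp_eq_of_surjective q.hom σ hq (by
    intro x hx
    show x - ιN (τ x) = 0
    have h1 : τ x = ⟨x, hx⟩ := hτid ⟨x, hx⟩
    rw [h1]
    show x - x = 0
    rw [sub_self])
  have hqs' : ∀ k : ↑K, q (s' k) = k := by
    intro k
    obtain ⟨x, rfl⟩ := hq k
    have h1 : s' (q x) = σ x := LinearMap.congr_fun hs' x
    rw [h1]
    show q (x - ιN (τ x)) = q x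
    rw [map_sub]
    have h2 : q (ιN (τ x)) = 0 := (τ x).2
    rw [h2, sub_zero]
  have hKproj : Projective K := by
    constructor
    intro E X fK e he
    let s'' : K ⟶ Q := ModuleCat.ofHom s'
    refine ⟨s'' ≫ @Projective.factorThru _ _ Q _ _ (Projective.projective_over K) ((q : Q ⟶ K) ≫ fK) e he, ?_⟩
    rw [Category.assoc, Projective.factorThru_comp, ← Category.assoc]
    have hqsI : s'' ≫ (q : Q ⟶ K) = 𝟙 K := by
      ext k
      exact congrArg Subtype.val (hqs' k)
    rw [hqsI, Category.id_comp]
  exact ⟨P, K, i, p, inferInstance, hKproj, hi, hp, Submodule.range_subtype _⟩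
end

section
/- If F is an S-strongly flat R-module, then for every s ∈ S the quotient module F/sF is a projective R/sR-module. -/
open CategoryTheory

section Aux

variable {R : Type} [CommRing R]

lemma moduleCat_subsingleton_iff_isZero (M : ModuleCat.{0} R) :
    Subsingleton M ↔ Limits.IsZero M := by
  constructor
  · intro h; exact ModuleCat.isZero_of_subsingleton M
  · intro h
    refine ⟨fun a b => ?_⟩
    have h0 : (𝟙 M : M ⟶ M) = 0 := h.eq_of_src _ _
    have hz : ∀ x : M, x = 0 := fun x => LinearMap.congr_fun (congrArg ModuleCat.Hom.hom h0) x
    rw [hz a, hz b]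

lemma bridge (X Y : ModuleCat.{0} R) (P : ProjectiveResolution X) :
    Subsingleton (((Ext R (ModuleCat R) 1).obj (Opposite.op X)).obj Y) ↔
    ∀ g : P.complex.X 1 ⟶ Y, P.complex.d 2 1 ≫ g = 0 →
      ∃ f : P.complex.X 0 ⟶ Y, P.complex.d 1 0 ≫ f = g := by
  have e := P.isoExt (R := R) 1 Y
  have h1 : Subsingleton (((Ext R (ModuleCat R) 1).obj (Opposite.op X)).obj Y) ↔
      Subsingleton ((P.complex.linearYonedaObj R Y).homology 1) :=
    Equiv.subsingleton_congr e.toLinearEquiv.toEquiv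
  rw [h1, moduleCat_subsingleton_iff_isZero,
    ← HomologicalComplex.exactAt_iff_isZero_homology,
    HomologicalComplex.exactAt_iff' _ 0 1 2 (by simp) (by simp)]
  rw [ShortComplex.moduleCat_exact_iff]
  simp only [HomologicalComplex.shortComplexFunctor'_obj_g,
    HomologicalComplex.shortComplexFunctor'_obj_f,
    HomologicalComplex.shortComplexFunctor'_obj_X₂,
    ChainComplex.linearYonedaObj_d, ChainComplex.linearYonedaObj_X]
  exact Iff.rfl

/-- `ker (π.f 0) = range (d 1 0)` for a projective resolution, in `ModuleCat R`. -/
lemma res_range_eq_ker (X : ModuleCat.{0} R) (P : ProjectiveResolution X) :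
    LinearMap.range (P.complex.d 1 0).hom = LinearMap.ker (P.π.f 0).hom := by
  have hex : (ShortComplex.mk (P.complex.d 1 0) (P.π.f 0)
      P.complex_d_comp_π_f_zero).Exact :=
    ShortComplex.exact_of_g_is_cokernel _ P.isColimitCokernelCofork
  exact hex.moduleCat_range_eq_ker

lemma res_range_eq_ker' (X : ModuleCat.{0} R) (P : ProjectiveResolution X) :
    LinearMap.range (P.complex.d 2 1).hom = LinearMap.ker (P.complex.d 1 0).hom :=
  (P.exact_succ 0).moduleCat_range_eq_ker


/-- Lemma A: Ext¹(X,Y) = 0 implies every extension of X by Y splits. -/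
lemma exists_section (X Y : Type) [AddCommGroup X] [Module R X] [AddCommGroup Y] [Module R Y]
    (h : Subsingleton (((Ext R (ModuleCat R) 1).obj (Opposite.op (ModuleCat.of R X))).obj
      (ModuleCat.of R Y)))
    {E : Type} [AddCommGroup E] [Module R E] (p : E →ₗ[R] X) (hp : Function.Surjective p)
    (ι : Y →ₗ[R] E) (hι : Function.Injective ι)
    (hr : LinearMap.range ι = LinearMap.ker p) :
    ∃ σ : X →ₗ[R] E, ∀ x, p (σ x) = x := by
  classical
  set XC : ModuleCat R := ModuleCat.of R X
  set YC : ModuleCat R := ModuleCat.of R Y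
  let P : ProjectiveResolution XC := ProjectiveResolution.of XC
  have hexact := (bridge XC YC P).mp h
  -- lift π₀ through p
  let pC : ModuleCat.of R E ⟶ XC := ModuleCat.ofHom p
  haveI : Epi pC := (ModuleCat.epi_iff_surjective pC).mpr hp
  haveI : Projective (P.complex.X 0) := P.projective 0
  let l : P.complex.X 0 ⟶ ModuleCat.of R E := @Projective.factorThru _ _ _ _ _ _ (P.π.f 0 : P.complex.X 0 ⟶ XC) pC ‹Epi pC›
  have hl : l ≫ pC = P.π.f 0 := Projective.factorThru_comp _ _
  -- the map P₁ → E lands in ker p = range ι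
  let m : P.complex.X 1 →ₗ[R] E := l.hom ∘ₗ (P.complex.d 1 0).hom
  have hm : ∀ a, m a ∈ LinearMap.range ι := by
    intro a
    rw [hr]
    have : pC (l (P.complex.d 1 0 a)) = (P.π.f 0) (P.complex.d 1 0 a) :=
      LinearMap.congr_fun (congrArg ModuleCat.Hom.hom hl) _
    have h2 : (P.π.f 0) (P.complex.d 1 0 a) = 0 :=
      LinearMap.congr_fun (congrArg ModuleCat.Hom.hom P.complex_d_comp_π_f_zero) a
    exact this.trans h2
  let eY : Y ≃ₗ[R] LinearMap.range ι := LinearEquiv.ofInjective ι hι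
  have hιeY : ∀ w : LinearMap.range ι, ι (eY.symm w) = (w : E) := by
    intro w
    conv_rhs => rw [← eY.apply_symm_apply w]
    rfl
  let g0 : P.complex.X 1 →ₗ[R] Y :=
    (eY.symm : LinearMap.range ι →ₗ[R] Y) ∘ₗ (m.codRestrict (LinearMap.range ι) hm)
  have hιg0 : ∀ a, ι (g0 a) = m a := fun a => hιeY _
  let g0C : P.complex.X 1 ⟶ YC := ModuleCat.ofHom g0
  have hcocycle : P.complex.d 2 1 ≫ g0C = 0 := by
    apply ModuleCat.hom_ext; apply LinearMap.ext; intro w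
    apply hι
    have hd : (P.complex.d 1 0) ((P.complex.d 2 1) w) = 0 := by
      have : (P.complex.d 2 1) w ∈ LinearMap.ker (P.complex.d 1 0).hom := by
        rw [← res_range_eq_ker' XC P]
        exact LinearMap.mem_range_self _ w
      exact this
    have h0 : m (P.complex.d 2 1 w) = 0 := by
      show l ((P.complex.d 1 0) ((P.complex.d 2 1) w)) = 0
      rw [hd]; exact map_zero _
    show ι (g0 ((P.complex.d 2 1) w)) = ι ((0 : P.complex.X 2 ⟶ YC) w)
    rw [hιg0]
    rw [h0]
    have : (0 : P.complex.X 2 ⟶ YC) w = 0 := rfl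
    rw [this, map_zero]
  obtain ⟨f, hf⟩ := hexact g0C hcocycle
  -- λ := l - ι ∘ f kills range (d 1 0) = ker π₀
  let lL : P.complex.X 0 →ₗ[R] E := l.hom
  let fL : P.complex.X 0 →ₗ[R] Y := f.hom
  let lam : P.complex.X 0 →ₗ[R] E := lL - ι ∘ₗ fL
  have hlam : LinearMap.ker (P.π.f 0).hom ≤ LinearMap.ker lam := by
    intro a ha
    rw [← res_range_eq_ker XC P] at ha
    obtain ⟨z, rfl⟩ := ha
    have h1 : f (P.complex.d 1 0 z) = g0 z := LinearMap.congr_fun (congrArg ModuleCat.Hom.hom hf) z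
    have h2 : ι (g0 z) = l (P.complex.d 1 0 z) := hιg0 z
    simp only [LinearMap.mem_ker, lam, LinearMap.sub_apply, LinearMap.coe_comp,
      Function.comp_apply]
    show lL ((P.complex.d 1 0) z) - ι (fL ((P.complex.d 1 0) z)) = 0
    show lL ((P.complex.d 1 0) z) - ι (f ((P.complex.d 1 0) z)) = 0
    rw [h1, h2]
    show l ((P.complex.d 1 0) z) - l ((P.complex.d 1 0) z) = 0
    abel
  -- descend through π₀
  have hπ0 : Function.Surjective (P.π.f 0) := by
    haveI : Epi (P.π.f 0) := inferInstance
    exact (ModuleCat.epi_iff_surjective (P.π.f 0)).mp this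
  let π0 : P.complex.X 0 →ₗ[R] X := (P.π.f 0 : P.complex.X 0 ⟶ XC).hom
  let e0 : (P.complex.X 0 ⧸ LinearMap.ker π0) ≃ₗ[R] X := π0.quotKerEquivOfSurjective hπ0
  let σ : X →ₗ[R] E := ((LinearMap.ker π0).liftQ lam hlam) ∘ₗ (e0.symm : X →ₗ[R] _)
  refine ⟨σ, ?_⟩
  intro x
  obtain ⟨a, rfl⟩ := hπ0 x
  have he0 : e0 (Submodule.Quotient.mk a) = π0 a := by
    simp [e0, LinearMap.quotKerEquivOfSurjective]
  have hsymm : e0.symm (π0 a) = Submodule.Quotient.mk a := by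
    rw [← he0, e0.symm_apply_apply]
  have hσ : σ (π0 a) = lam a := by
    simp only [σ, LinearMap.coe_comp, Function.comp_apply, LinearEquiv.coe_coe, hsymm]
    exact Submodule.liftQ_apply _ _ _
  show p (σ (π0 a)) = π0 a
  rw [hσ]
  have hpl : p (lL a) = π0 a := LinearMap.congr_fun (congrArg ModuleCat.Hom.hom hl) a
  have hpι : p (ι (fL a)) = 0 := by
    have hmem : ι (fL a) ∈ LinearMap.ker p := hr ▸ LinearMap.mem_range_self ι (fL a)
    exact hmem
  show p (lL a - ι (fL a)) = π0 a
  rw [map_sub, hpl, hpι, sub_zero]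

/-- Lemma B: if every extension of X by Y splits, then Ext¹(X,Y) = 0. -/
lemma ext1Zero_of_splits (X Y : Type) [AddCommGroup X] [Module R X] [AddCommGroup Y] [Module R Y]
    (h : ∀ (E : Type) [AddCommGroup E] [Module R E] (p : E →ₗ[R] X), Function.Surjective p →
      ∀ (ι : Y →ₗ[R] E), Function.Injective ι → LinearMap.range ι = LinearMap.ker p →
      ∃ σ : X →ₗ[R] E, ∀ x, p (σ x) = x) :
    Subsingleton (((Ext R (ModuleCat R) 1).obj (Opposite.op (ModuleCat.of R X))).obj
      (ModuleCat.of R Y)) := by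
  classical
  set XC : ModuleCat R := ModuleCat.of R X
  set YC : ModuleCat R := ModuleCat.of R Y
  let P : ProjectiveResolution XC := ProjectiveResolution.of XC
  rw [bridge XC YC P]
  intro g hg
  set gL : P.complex.X 1 →ₗ[R] Y := g.hom with hgL
  set d10 : P.complex.X 1 →ₗ[R] P.complex.X 0 := (P.complex.d 1 0).hom with hd10
  set d21 : P.complex.X 2 →ₗ[R] P.complex.X 1 := (P.complex.d 2 1).hom with hd21
  set π0 : P.complex.X 0 →ₗ[R] X := (P.π.f 0).hom with hπ0
  have hπ0surj : Function.Surjective π0 := by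
    haveI : Epi (P.π.f 0) := inferInstance
    exact (ModuleCat.epi_iff_surjective (P.π.f 0)).mp this
  have hgd : ∀ w, gL (d21 w) = 0 := by
    intro w
    exact LinearMap.congr_fun (congrArg ModuleCat.Hom.hom hg) w
  have hker0 : LinearMap.range d10 = LinearMap.ker π0 := res_range_eq_ker XC P
  have hker1 : LinearMap.range d21 = LinearMap.ker d10 := res_range_eq_ker' XC P
  -- the pushout extension
  let φ : P.complex.X 1 →ₗ[R] Y × P.complex.X 0 := gL.prod (-d10)
  let rel : Submodule R (Y × P.complex.X 0) := LinearMap.range φ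
  let E := (Y × P.complex.X 0) ⧸ rel
  let mk : Y × P.complex.X 0 →ₗ[R] E := rel.mkQ
  -- p : E → X
  have hπd : ∀ z, π0 (d10 z) = 0 := fun z =>
    LinearMap.congr_fun (congrArg ModuleCat.Hom.hom P.complex_d_comp_π_f_zero) z
  have hrel : rel ≤ LinearMap.ker (π0 ∘ₗ LinearMap.snd R Y (P.complex.X 0)) := by
    rintro ⟨y, x⟩ ⟨z, hz⟩
    have hsnd : -(d10 z) = x := congrArg Prod.snd hz
    simp only [LinearMap.mem_ker, LinearMap.coe_comp, Function.comp_apply, LinearMap.snd_apply]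
    rw [← hsnd, map_neg, hπd z, neg_zero]
  let p : E →ₗ[R] X := rel.liftQ (π0 ∘ₗ LinearMap.snd R Y (P.complex.X 0)) hrel
  have hpm : ∀ v : Y × P.complex.X 0, p (mk v) = π0 v.2 := fun v => rfl
  have hp : Function.Surjective p := by
    intro x
    obtain ⟨a, ha⟩ := hπ0surj x
    exact ⟨mk (0, a), by rw [hpm]; exact ha⟩
  -- ι : Y → E
  let ι : Y →ₗ[R] E := mk ∘ₗ LinearMap.inl R Y (P.complex.X 0)
  have hι : Function.Injective ι := by
    intro y₁ y₂ hy
    have hmem : ((y₁, 0) - (y₂, 0) : Y × P.complex.X 0) ∈ rel :=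
      (Submodule.Quotient.eq rel).mp hy
    rw [Prod.mk_sub_mk, sub_zero] at hmem
    obtain ⟨z, hz⟩ := hmem
    have hz2 : -(d10 z) = 0 := congrArg Prod.snd hz
    have hz1 : gL z = y₁ - y₂ := congrArg Prod.fst hz
    have hzk : z ∈ LinearMap.ker d10 := by
      simp only [LinearMap.mem_ker]
      exact neg_eq_zero.mp hz2
    rw [← hker1] at hzk
    obtain ⟨w, hw⟩ := hzk
    have : gL z = 0 := by rw [← hw]; exact hgd w
    have h0 : y₁ - y₂ = 0 := by rw [← hz1, this]
    exact sub_eq_zero.mp h0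
  have hri : LinearMap.range ι = LinearMap.ker p := by
    apply le_antisymm
    · rintro _ ⟨y, rfl⟩
      show p (mk (y, 0)) = 0
      rw [hpm]
      exact map_zero π0
    · rintro e he
      obtain ⟨⟨y, x⟩, rfl⟩ := rel.mkQ_surjective e
      have hx : x ∈ LinearMap.ker π0 := by
        have := he
        rw [LinearMap.mem_ker, hpm] at this
        exact this
      rw [← hker0] at hx
      obtain ⟨z, hz⟩ := hx
      refine ⟨y + gL z, ?_⟩
      show mk (y + gL z, 0) = mk (y, x)
      rw [← sub_eq_zero, ← map_sub]
      have : ((y + gL z, 0) - (y, x) : Y × P.complex.X 0) = φ z := by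
        have : (φ z : Y × P.complex.X 0) = (gL z, -(d10 z)) := rfl
        rw [this, Prod.ext_iff]
        constructor
        · show y + gL z - y = gL z; abel
        · show (0 : P.complex.X 0) - x = -(d10 z); rw [hz]; abel
      rw [this]
      exact (Submodule.Quotient.mk_eq_zero rel).mpr ⟨z, rfl⟩
  obtain ⟨σ, hσ⟩ := h E p hp ι hι hri
  -- construct f
  let j : P.complex.X 0 →ₗ[R] E := mk ∘ₗ LinearMap.inr R Y (P.complex.X 0)
  let δ : P.complex.X 0 →ₗ[R] E := j - σ ∘ₗ π0
  have hδ : ∀ a, δ a ∈ LinearMap.range ι := by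
    intro a
    rw [hri]
    show p (j a - σ (π0 a)) = 0
    rw [map_sub, hσ]
    have hja : p (j a) = π0 a := hpm (0, a)
    rw [hja, sub_self]
  let eY : Y ≃ₗ[R] LinearMap.range ι := LinearEquiv.ofInjective ι hι
  have hιeY : ∀ w : LinearMap.range ι, ι (eY.symm w) = (w : E) := by
    intro w
    conv_rhs => rw [← eY.apply_symm_apply w]
    rfl
  let f0 : P.complex.X 0 →ₗ[R] Y :=
    (eY.symm : LinearMap.range ι →ₗ[R] Y) ∘ₗ (δ.codRestrict (LinearMap.range ι) hδ)
  have hιf0 : ∀ a, ι (f0 a) = δ a := fun a => hιeY _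
  let f : P.complex.X 0 ⟶ YC := ModuleCat.ofHom f0
  refine ⟨f, ?_⟩
  apply ModuleCat.hom_ext; apply LinearMap.ext; intro z
  show f0 (d10 z) = gL z
  apply hι
  rw [hιf0]
  show j (d10 z) - σ (π0 (d10 z)) = ι (gL z)
  have hπd : π0 (d10 z) = 0 := LinearMap.congr_fun (congrArg ModuleCat.Hom.hom P.complex_d_comp_π_f_zero) z
  rw [hπd, map_zero, sub_zero]
  show mk (0, d10 z) = mk (gL z, 0)
  rw [← sub_eq_zero, ← map_sub]
  have : ((0, d10 z) - (gL z, 0) : Y × P.complex.X 0) = -φ z := by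
    have : (φ z : Y × P.complex.X 0) = (gL z, -(d10 z)) := rfl
    rw [this, Prod.ext_iff]
    constructor
    · show (0 : Y) - gL z = -(gL z); abel
    · show d10 z - 0 = -(-(d10 z)); abel
  rw [this, map_neg, neg_eq_zero]
  exact (Submodule.Quotient.mk_eq_zero rel).mpr ⟨z, rfl⟩

/-- torsion modules are weakly cotorsion -/
lemma weaklyCotorsion_of_torsion (S : Submonoid R) {s : R} (hs : s ∈ S)
    (Y : Type) [AddCommGroup Y] [Module R Y] (hY : ∀ y : Y, s • y = 0) :
    Subsingleton (((Ext R (ModuleCat R) 1).obj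
      (Opposite.op (ModuleCat.of R (Localization S)))).obj (ModuleCat.of R Y)) := by
  apply ext1Zero_of_splits (R := R) (Localization S) Y
  intro E _ _ p hp ι hι hri
  -- multiplication by s on E kills ker p
  let μ : E →ₗ[R] E := s • LinearMap.id
  have hker : LinearMap.ker p ≤ LinearMap.ker μ := by
    intro e he
    rw [← hri] at he
    obtain ⟨y, rfl⟩ := he
    show s • ι y = 0
    rw [← map_smul, hY, map_zero]
  let e0 : (E ⧸ LinearMap.ker p) ≃ₗ[R] Localization S := p.quotKerEquivOfSurjective hp
  let τ : Localization S →ₗ[R] E := ((LinearMap.ker p).liftQ μ hker) ∘ₗ (e0.symm : _ →ₗ[R] _)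
  have hτ : ∀ a : E, τ (p a) = s • a := by
    intro a
    have he0 : e0 (Submodule.Quotient.mk a) = p a := by
      simp [e0, LinearMap.quotKerEquivOfSurjective]
    have hsymm : e0.symm (p a) = Submodule.Quotient.mk a := by
      rw [← he0, e0.symm_apply_apply]
    show ((LinearMap.ker p).liftQ μ hker) (e0.symm (p a)) = s • a
    rw [hsymm]
    exact Submodule.liftQ_apply _ _ _
  have hpτ : ∀ x : Localization S, p (τ x) = s • x := by
    intro x
    obtain ⟨a, rfl⟩ := hp x
    rw [hτ, map_smul]
  -- the multiplication by 1/s on Localization S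
  let u : Localization S := Localization.mk 1 ⟨s, hs⟩
  have hu : ∀ x : Localization S, s • (u * x) = x := by
    intro x
    rw [← smul_mul_assoc]
    have : s • u = 1 := by
      rw [show s • u = Localization.mk s ⟨s, hs⟩ from by
        rw [Localization.smul_mk, smul_eq_mul, mul_one]]
      exact Localization.mk_self ⟨s, hs⟩
    rw [this, one_mul]
  let ν : Localization S →ₗ[R] Localization S :=
    { toFun := fun x => u * x
      map_add' := fun a b => mul_add u a b
      map_smul' := fun r x => by simp [mul_smul_comm] }
  refine ⟨τ ∘ₗ ν, ?_⟩
  intro x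
  show p (τ (ν x)) = x
  rw [hpτ]
  exact hu x

end Aux

theorem stmt_8 (R : Type) [CommRing R] (S : Submonoid R)
    (F : Type) [AddCommGroup F] [Module R F] (hF : SStronglyFlat R S F) :
    ∀ s : R, s ∈ S →
      Module.Projective (R ⧸ Ideal.span {s}) (F ⧸ (Ideal.span {s} • (⊤ : Submodule R F))) := by
  intro s hs
  set I : Ideal R := Ideal.span {s} with hI
  let A := R ⧸ I
  let P := F ⧸ (I • (⊤ : Submodule R F))
  have hmkSurj : Function.Surjective (algebraMap R A) := by
    rw [Ideal.Quotient.algebraMap_eq]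
    exact Ideal.Quotient.mk_surjective
  have hmks : Ideal.Quotient.mk I s = 0 := by
    rw [Ideal.Quotient.eq_zero_iff_mem]
    exact Ideal.mem_span_singleton_self s
  -- R-module structure on any A-module via mk
  let M := P →₀ A
  letI : Module R M := Module.compHom M (Ideal.Quotient.mk I)
  haveI : IsScalarTower R A M := by
    constructor
    intro r a m
    show (r • a) • m = (Ideal.Quotient.mk I r) • (a • m)
    rw [Algebra.smul_def, Ideal.Quotient.algebraMap_eq, mul_smul]
  haveI : IsScalarTower R A P := by
    constructor
    intro r a x
    obtain ⟨t, rfl⟩ := Ideal.Quotient.mk_surjective (I := I) a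
    obtain ⟨f, rfl⟩ := Submodule.Quotient.mk_surjective _ x
    show (r • Ideal.Quotient.mk I t) • _ = r • (Ideal.Quotient.mk I t •
      Submodule.Quotient.mk (p := I • (⊤ : Submodule R F)) f)
    rw [Algebra.smul_def, Ideal.Quotient.algebraMap_eq, ← map_mul,
      Module.Quotient.mk_smul_mk, Module.Quotient.mk_smul_mk, ← Submodule.Quotient.mk_smul,
      mul_smul]
  -- kill goal via projective_def'
  rw [Module.projective_def']
  -- the free A-module M and its total map
  let piA : M →ₗ[A] P := Finsupp.linearCombination A (id : P → P)
  have hpiA : ∀ x : P, piA (Finsupp.single x 1) = x := by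
    intro x
    rw [Finsupp.linearCombination_single, one_smul]
    rfl
  let piR : M →ₗ[R] P :=
    { toFun := piA
      map_add' := piA.map_add
      map_smul' := fun r m => by
        show piA ((Ideal.Quotient.mk I r) • m) = r • piA m
        rw [map_smul, ← Ideal.Quotient.algebraMap_eq, IsScalarTower.algebraMap_smul] }
  have hpiRsurj : Function.Surjective piR := fun x => ⟨Finsupp.single x 1, hpiA x⟩
  let q : F →ₗ[R] P := (I • (⊤ : Submodule R F)).mkQ
  have hqsurj : Function.Surjective q := Submodule.mkQ_surjective _
  -- the pullback
  let D : M × F →ₗ[R] P := piR ∘ₗ LinearMap.fst R M F - q ∘ₗ LinearMap.snd R M F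
  let E := LinearMap.ker D
  let pE : E →ₗ[R] F := LinearMap.snd R M F ∘ₗ E.subtype
  let K := LinearMap.ker piR
  have hKtor : ∀ y : K, s • y = 0 := by
    intro y
    apply Subtype.ext
    show s • (y : M) = 0
    have : s • (y : M) = (Ideal.Quotient.mk I s) • (y : M) := rfl
    rw [this, hmks, zero_smul]
  let ιE : K →ₗ[R] E :=
    LinearMap.codRestrict E ((LinearMap.inl R M F) ∘ₗ K.subtype) (by
      intro k
      show D ((k : M), 0) = 0
      show piR (k : M) - q 0 = 0
      rw [map_zero, sub_zero]
      exact k.2)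
  have hpEsurj : Function.Surjective pE := by
    intro x
    obtain ⟨m, hm⟩ := hpiRsurj (q x)
    exact ⟨⟨(m, x), by show piR m - q x = 0; rw [hm, sub_self]⟩, rfl⟩
  have hιEinj : Function.Injective ιE := by
    intro k₁ k₂ hk
    apply Subtype.ext
    have := congrArg (fun e : E => (e : M × F).1) hk
    exact this
  have hriE : LinearMap.range ιE = LinearMap.ker pE := by
    apply le_antisymm
    · rintro _ ⟨k, rfl⟩
      show ((((k : M), (0 : F)) : M × F)).2 = 0
      rfl
    · rintro ⟨⟨m, x⟩, hmx⟩ he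
      have hx : x = 0 := he
      subst hx
      have hm : piR m = 0 := by
        have : piR m - q 0 = 0 := hmx
        rwa [map_zero, sub_zero] at this
      exact ⟨⟨m, hm⟩, Subtype.ext rfl⟩
  -- K is weakly cotorsion, so Ext¹(F, K) = 0 and the pullback splits
  have hwc : SWeaklyCotorsion R S K := weaklyCotorsion_of_torsion S hs K hKtor
  have hext : ext1Zero R F K := hF K hwc
  obtain ⟨σ, hσ⟩ := exists_section (R := R) (E := E) F K hext pE hpEsurj ιE hιEinj hriE
  -- h : F →ₗ[R] M
  let hmap : F →ₗ[R] M := LinearMap.fst R M F ∘ₗ E.subtype ∘ₗ σ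
  have hπh : ∀ x : F, piR (hmap x) = q x := by
    intro x
    have hD : D ((σ x : M × F)) = 0 := (σ x).2
    have hsnd : ((σ x : M × F)).2 = x := hσ x
    have : piR ((σ x : M × F)).1 - q ((σ x : M × F)).2 = 0 := hD
    rw [hsnd] at this
    have := sub_eq_zero.mp this
    exact this
  -- hmap kills I • ⊤
  have hsub : I • (⊤ : Submodule R F) ≤ LinearMap.ker hmap := by
    apply Submodule.smul_le.mpr
    intro r hr f _
    rw [LinearMap.mem_ker, map_smul]
    show (Ideal.Quotient.mk I r) • hmap f = 0
    rw [Ideal.Quotient.eq_zero_iff_mem.mpr hr, zero_smul]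
  let hbar : P →ₗ[R] M := (I • (⊤ : Submodule R F)).liftQ hmap hsub
  have hbar_eq : ∀ f : F, hbar (q f) = hmap f := fun f => rfl
  -- upgrade to A-linear
  let hbarA : P →ₗ[A] M := @LinearMap.extendScalarsOfSurjective R A _ _ _ P M _ _ _ _
    (by exact ‹IsScalarTower R A P›) _ _ (by exact ‹IsScalarTower R A M›) hmkSurj hbar
  refine ⟨hbarA, ?_⟩
  apply LinearMap.ext
  intro x
  obtain ⟨f, rfl⟩ := hqsurj x
  show piA (hbarA (q f)) = q f
  have h1 : hbarA (q f) = hbar (q f) := rfl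
  rw [h1, hbar_eq]
  exact hπh f
end

section
/- The class of optimistically S-strongly flat R-modules is closed under kernels of epimorphisms: if 0 → A → B → C → 0 is exact with B and C optimistically S-strongly flat, then A is optimistically S-strongly flat. -/
open CategoryTheory

/-- A flat `R`-module `F` is optimistically `S`-strongly flat if `F ⊗_R R_S` is a projective
`R_S`-module and, for every `s ∈ S`, `F/sF` is a projective `R/sR`-module. -/
def OSStronglyFlat (R : Type) [CommRing R] (S : Submonoid R) (F : Type)
    [AddCommGroup F] [Module R F] : Prop :=
  Module.Flat R F ∧
    Module.Projective (Localization S) (LocalizedModule S F) ∧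
    ∀ s : R, s ∈ S →
      Module.Projective (R ⧸ Ideal.span {s}) (F ⧸ (Ideal.span {s} • (⊤ : Submodule R F)))

section Aux

open Pointwise

/-- The kernel of an epimorphism between projective modules, where the quotient is projective,
is itself projective. -/
theorem aux_proj {R M N P : Type*} [CommRing R] [AddCommGroup M] [Module R M]
    [AddCommGroup N] [Module R N] [AddCommGroup P] [Module R P]
    (f : M →ₗ[R] N) (g : N →ₗ[R] P) (hf : Function.Injective f)
    (hg : Function.Surjective g) (hfg : LinearMap.range f = LinearMap.ker g)
    (hN : Module.Projective R N) (hP : Module.Projective R P) :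
    Module.Projective R M := by
  obtain ⟨h, hh⟩ := Module.projective_lifting_property g LinearMap.id hg
  have hmem : ∀ n : N, ((LinearMap.id - h ∘ₗ g : N →ₗ[R] N)) n ∈ LinearMap.range f := by
    intro n
    rw [hfg, LinearMap.mem_ker]
    have h1 : g (h (g n)) = g n := LinearMap.congr_fun hh (g n)
    simp [h1]
  let e := LinearEquiv.ofInjective f hf
  let r : N →ₗ[R] M :=
    e.symm.toLinearMap ∘ₗ (LinearMap.id - h ∘ₗ g : N →ₗ[R] N).codRestrict (LinearMap.range f) hmem
  refine Module.Projective.of_split f r ?_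
  ext m
  have hgm : g (f m) = 0 := by
    have : f m ∈ LinearMap.ker g := hfg ▸ LinearMap.mem_range_self f m
    exact this
  have hcod : ((LinearMap.id - h ∘ₗ g : N →ₗ[R] N).codRestrict (LinearMap.range f) hmem) (f m)
      = e m := by
    apply Subtype.ext
    rw [LinearMap.codRestrict_apply]
    simp only [LinearMap.sub_apply, LinearMap.id_apply, LinearMap.comp_apply, hgm, map_zero,
      sub_zero]
    exact (LinearEquiv.ofInjective_apply f m).symm
  simp only [LinearMap.comp_apply, LinearMap.id_apply, r, hcod]
  exact e.symm_apply_apply m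

/-- Membership in `span {s} • ⊤`. -/
theorem mem_span_singleton_smul_top {R M : Type*} [CommRing R] [AddCommGroup M] [Module R M]
    (s : R) (x : M) : x ∈ (Ideal.span {s} • (⊤ : Submodule R M)) ↔ ∃ m, x = s • m := by
  constructor
  · intro hx
    rw [Submodule.ideal_span_singleton_smul] at hx
    have hx' : x ∈ s • ((⊤ : Submodule R M) : Set M) := by
      rw [← Submodule.coe_pointwise_smul]
      exact hx
    obtain ⟨m, -, rfl⟩ := Set.mem_smul_set.mp hx'
    exact ⟨m, rfl⟩
  · rintro ⟨m, rfl⟩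
    exact Submodule.smul_mem_smul (Ideal.mem_span_singleton_self s) trivial

/-- Kernels of epimorphisms of flat modules are flat. -/
theorem aux_flat {R A B C : Type} [CommRing R] [AddCommGroup A] [Module R A]
    [AddCommGroup B] [Module R B] [AddCommGroup C] [Module R C]
    (f : A →ₗ[R] B) (g : B →ₗ[R] C) (hf : Function.Injective f)
    (hg : Function.Surjective g) (hfg : LinearMap.range f = LinearMap.ker g)
    (hB : Module.Flat R B) (hC : Module.Flat R C) : Module.Flat R A := by
  classical
  have hgf : ∀ a₀ : A, g (f a₀) = 0 := fun a₀ ↦ by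
    rw [← LinearMap.mem_ker, ← hfg]
    exact LinearMap.mem_range_self f a₀
  apply Module.Flat.of_forall_isTrivialRelation
  intro ι r a hra
  have hrb : ∑ i, r i • f (a i) = 0 := by
    simp_rw [← map_smul, ← map_sum, hra, map_zero]
  haveI : Module.Flat R B := hB
  haveI : Module.Flat R C := hC
  obtain ⟨κ, c, y, hy, hc⟩ := Module.Flat.isTrivialRelation_of_sum_smul_eq_zero hrb
  let x : (Fin κ →₀ R) →ₗ[R] C := Finsupp.linearCombination R fun j ↦ g (y j)
  let φ : (Fin ι →₀ R) →ₗ[R] (Fin κ →₀ R) :=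
    Finsupp.linearCombination R fun i ↦ Finsupp.equivFunOnFinite.symm (c i)
  have hx : ∀ v : Fin κ →₀ R, x v = ∑ j, v j • g (y j) := by
    intro v
    rw [Finsupp.linearCombination_apply, Finsupp.sum_fintype]
    intro j; exact zero_smul _ _
  have hφ : ∀ i, φ (Finsupp.single i 1) = Finsupp.equivFunOnFinite.symm (c i) := by
    intro i; simp [φ]
  have hsum_single : ∀ i, (∑ j, c i j • Finsupp.single j (1 : R)) =
      Finsupp.equivFunOnFinite.symm (c i) := by
    intro i
    ext k
    simp [Finsupp.single_apply, Finset.sum_ite_eq']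
  have hxφ : x ∘ₗ φ = 0 := by
    ext i
    have : x (φ (Finsupp.single i 1)) = 0 := by
      rw [hφ, ← hsum_single, map_sum]
      have h1 : ∀ j, x (c i j • Finsupp.single j (1:R)) = c i j • g (y j) := by
        intro j
        rw [map_smul, hx]
        simp [Finsupp.single_apply, Finset.sum_ite_eq']
      rw [Finset.sum_congr rfl fun j _ ↦ h1 j]
      have h2 : ∑ j, c i j • g (y j) = g (∑ j, c i j • y j) := by
        simp_rw [← map_smul, ← map_sum]
      rw [h2, ← hy i, hgf]
    simpa using this
  haveI : Module.Finite R (Fin ι →₀ R) :=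
    Module.Finite.equiv (Finsupp.linearEquivFunOnFinite R R (Fin ι)).symm
  haveI : Module.Finite R (Fin κ →₀ R) :=
    Module.Finite.equiv (Finsupp.linearEquivFunOnFinite R R (Fin κ)).symm
  obtain ⟨lam, α, yC, hyCα, hαφ⟩ :=
    Module.Flat.exists_factorization_of_comp_eq_zero_of_free (f := φ) (x := x) hxφ
  choose z hz using fun l : Fin lam ↦ hg (yC (Finsupp.single l 1))
  have hyCv : ∀ v : Fin lam →₀ R, yC v = ∑ l, v l • yC (Finsupp.single l 1) := by
    intro v
    conv_lhs => rw [← Finsupp.univ_sum_single v]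
    rw [map_sum]
    refine Finset.sum_congr rfl fun l _ ↦ ?_
    rw [← Finsupp.smul_single_one l (v l), map_smul]
  set bB : Fin κ → B := fun j ↦ y j - ∑ l, (α (Finsupp.single j 1)) l • z l with hbB
  have hgb : ∀ j, g (bB j) = 0 := by
    intro j
    have h1 : g (y j) = x (Finsupp.single j 1) := by
      rw [hx]
      simp [Finsupp.single_apply, Finset.sum_ite_eq']
    have h2 : x (Finsupp.single j 1) = yC (α (Finsupp.single j 1)) := by
      rw [hyCα]; rfl
    simp only [hbB, map_sub, map_sum, map_smul, hz]
    rw [h1, h2, hyCv (α (Finsupp.single j 1)), sub_self]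
  have hmem : ∀ j, bB j ∈ LinearMap.range f := fun j ↦ by
    rw [hfg]
    exact LinearMap.mem_ker.mpr (hgb j)
  choose a' ha' using fun j ↦ hmem j
  refine ⟨κ, c, a', fun i ↦ hf ?_, hc⟩
  have key : ∀ l, ∑ j, c i j * (α (Finsupp.single j 1)) l = 0 := by
    intro l
    have h1 : (∑ j, c i j • α (Finsupp.single j 1)) = 0 := by
      have h2 : (∑ j, c i j • α (Finsupp.single j 1)) = α (φ (Finsupp.single i 1)) := by
        rw [hφ, ← hsum_single, map_sum]
        refine Finset.sum_congr rfl fun j _ ↦ ?_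
        rw [map_smul]
      rw [h2]
      exact LinearMap.congr_fun hαφ (Finsupp.single i 1)
    calc ∑ j, c i j * (α (Finsupp.single j 1)) l
        = (∑ j, c i j • α (Finsupp.single j 1)) l := by
          rw [Finsupp.finset_sum_apply]
          rfl
      _ = 0 := by rw [h1]; rfl
  have hswap : ∑ j, c i j • ∑ l, (α (Finsupp.single j 1)) l • z l = 0 := by
    calc ∑ j, c i j • ∑ l, (α (Finsupp.single j 1)) l • z l
        = ∑ j, ∑ l, (c i j * (α (Finsupp.single j 1)) l) • z l := by
          refine Finset.sum_congr rfl fun j _ ↦ ?_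
          rw [Finset.smul_sum]
          refine Finset.sum_congr rfl fun l _ ↦ ?_
          rw [smul_smul]
      _ = ∑ l, ∑ j, (c i j * (α (Finsupp.single j 1)) l) • z l := Finset.sum_comm
      _ = 0 := by
          refine Finset.sum_eq_zero fun l _ ↦ ?_
          rw [← Finset.sum_smul, key l, zero_smul]
  calc f (a i) = ∑ j, c i j • y j := hy i
    _ = ∑ j, c i j • bB j + ∑ j, c i j • ∑ l, (α (Finsupp.single j 1)) l • z l := by
        rw [← Finset.sum_add_distrib]
        refine Finset.sum_congr rfl fun j _ ↦ ?_
        rw [← smul_add, hbB]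
        simp
    _ = ∑ j, c i j • bB j := by rw [hswap, add_zero]
    _ = f (∑ j, c i j • a' j) := by
        rw [map_sum]
        refine Finset.sum_congr rfl fun j _ ↦ ?_
        rw [map_smul, ha' j]

/-- Reduction mod `s` preserves the exactness and projectivity statement. -/
theorem aux_mod {R A B C : Type} [CommRing R] [AddCommGroup A] [Module R A]
    [AddCommGroup B] [Module R B] [AddCommGroup C] [Module R C]
    (f : A →ₗ[R] B) (g : B →ₗ[R] C) (hf : Function.Injective f)
    (hg : Function.Surjective g) (hfg : LinearMap.range f = LinearMap.ker g)
    (hC : Module.Flat R C) (s : R)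
    (hPB : Module.Projective (R ⧸ Ideal.span {s}) (B ⧸ (Ideal.span {s} • (⊤ : Submodule R B))))
    (hPC : Module.Projective (R ⧸ Ideal.span {s}) (C ⧸ (Ideal.span {s} • (⊤ : Submodule R C)))) :
    Module.Projective (R ⧸ Ideal.span {s}) (A ⧸ (Ideal.span {s} • (⊤ : Submodule R A))) := by
  classical
  set I : Ideal R := Ideal.span {s} with hI
  have hgf : ∀ a₀ : A, g (f a₀) = 0 := fun a₀ ↦ by
    rw [← LinearMap.mem_ker, ← hfg]
    exact LinearMap.mem_range_self f a₀
  have halg : Function.Surjective (algebraMap R (R ⧸ I)) := by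
    rw [Ideal.Quotient.algebraMap_eq]
    exact Ideal.Quotient.mk_surjective
  have hcf : (I • (⊤ : Submodule R A)) ≤ (I • (⊤ : Submodule R B)).comap f := by
    rw [← Submodule.map_le_iff_le_comap, Submodule.map_smul'']
    exact Submodule.smul_mono le_rfl le_top
  have hcg : (I • (⊤ : Submodule R B)) ≤ (I • (⊤ : Submodule R C)).comap g := by
    rw [← Submodule.map_le_iff_le_comap, Submodule.map_smul'']
    exact Submodule.smul_mono le_rfl le_top
  let F : (A ⧸ (I • (⊤ : Submodule R A))) →ₗ[R ⧸ I] (B ⧸ (I • (⊤ : Submodule R B))) :=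
    (Submodule.mapQ _ _ f hcf).extendScalarsOfSurjective halg
  let G : (B ⧸ (I • (⊤ : Submodule R B))) →ₗ[R ⧸ I] (C ⧸ (I • (⊤ : Submodule R C))) :=
    (Submodule.mapQ _ _ g hcg).extendScalarsOfSurjective halg
  have hFmk : ∀ a : A, F (Submodule.Quotient.mk a) = Submodule.Quotient.mk (f a) :=
    fun a ↦ rfl
  have hGmk : ∀ b : B, G (Submodule.Quotient.mk b) = Submodule.Quotient.mk (g b) :=
    fun b ↦ rfl
  -- surjectivity of G
  have hGsurj : Function.Surjective G := by
    intro cb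
    obtain ⟨c0, rfl⟩ := Submodule.Quotient.mk_surjective _ cb
    obtain ⟨b, rfl⟩ := hg c0
    exact ⟨Submodule.Quotient.mk b, hGmk b⟩
  -- range F = ker G
  have hrange : LinearMap.range F = LinearMap.ker G := by
    apply le_antisymm
    · rintro _ ⟨abar, rfl⟩
      obtain ⟨a, rfl⟩ := Submodule.Quotient.mk_surjective _ abar
      rw [LinearMap.mem_ker, hFmk, hGmk, hgf]
      exact Submodule.Quotient.mk_zero _
    · intro xbar hx
      obtain ⟨b, rfl⟩ := Submodule.Quotient.mk_surjective _ xbar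
      rw [LinearMap.mem_ker, hGmk, Submodule.Quotient.mk_eq_zero] at hx
      obtain ⟨c0, hc0⟩ := (mem_span_singleton_smul_top s _).mp hx
      obtain ⟨b', hb'⟩ := hg c0
      have hker : b - s • b' ∈ LinearMap.ker g := by
        rw [LinearMap.mem_ker, map_sub, map_smul, hb', ← hc0, sub_self]
      obtain ⟨a, ha⟩ : b - s • b' ∈ LinearMap.range f := by rw [hfg]; exact hker
      refine ⟨Submodule.Quotient.mk a, ?_⟩
      rw [hFmk, ha]
      rw [Submodule.Quotient.eq]
      have : b - s • b' - b = -(s • b') := by abel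
      rw [this]
      exact neg_mem ((mem_span_singleton_smul_top s _).mpr ⟨b', rfl⟩)
  -- injectivity of F (uses flatness of C)
  have hker : ∀ a : A, f a ∈ (I • (⊤ : Submodule R B)) → a ∈ (I • (⊤ : Submodule R A)) := by
    intro a ha
    obtain ⟨b, hb⟩ := (mem_span_singleton_smul_top s _).mp ha
    have hrel : ∑ _i : Unit, (fun _ : Unit ↦ s) _i • (fun _ : Unit ↦ g b) _i = 0 := by
      have h1 : s • g b = 0 := by
        rw [← map_smul, ← hb, hgf]
      simpa using h1
    haveI : Module.Flat R C := hC
    obtain ⟨κ, ρ, d, hd, hρ⟩ := Module.Flat.isTrivialRelation_of_sum_smul_eq_zero hrel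
    choose w hw using fun j ↦ hg (d j)
    have hbk : g (b - ∑ j, ρ () j • w j) = 0 := by
      rw [map_sub, map_sum]
      have : ∑ j, g (ρ () j • w j) = ∑ j, ρ () j • d j := by
        refine Finset.sum_congr rfl fun j _ ↦ ?_
        rw [map_smul, hw]
      rw [this, ← hd (), sub_self]
    obtain ⟨a', ha'⟩ : b - ∑ j, ρ () j • w j ∈ LinearMap.range f := by
      rw [hfg]
      exact LinearMap.mem_ker.mpr hbk
    have hsρ : ∀ j, s * ρ () j = 0 := by
      intro j
      have := hρ j
      simpa using this
    have hfa : f a = f (s • a') := by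
      rw [map_smul, ha', smul_sub, hb, Finset.smul_sum]
      have : ∑ j, s • (ρ () j • w j) = 0 := by
        refine Finset.sum_eq_zero fun j _ ↦ ?_
        rw [smul_smul, hsρ j, zero_smul]
      rw [this, sub_zero]
    have : a = s • a' := hf hfa
    rw [this]
    exact (mem_span_singleton_smul_top s _).mpr ⟨a', rfl⟩
  have hFinj : Function.Injective F := by
    rw [← LinearMap.ker_eq_bot, eq_bot_iff]
    intro xbar hx
    obtain ⟨a, rfl⟩ := Submodule.Quotient.mk_surjective _ xbar
    rw [LinearMap.mem_ker, hFmk, Submodule.Quotient.mk_eq_zero] at hx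
    rw [Submodule.mem_bot, Submodule.Quotient.mk_eq_zero]
    exact hker a hx
  exact aux_proj F G hFinj hGsurj hrange hPB hPC

end Aux

theorem stmt_10 (R : Type) [CommRing R] (S : Submonoid R)
    (A B C : Type) [AddCommGroup A] [Module R A] [AddCommGroup B] [Module R B]
    [AddCommGroup C] [Module R C]
    (f : A →ₗ[R] B) (g : B →ₗ[R] C)
    (hf : Function.Injective f) (hg : Function.Surjective g)
    (hfg : LinearMap.range f = LinearMap.ker g)
    (hB : OSStronglyFlat R S B) (hC : OSStronglyFlat R S C) :
    OSStronglyFlat R S A := by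
  obtain ⟨hBf, hBl, hBq⟩ := hB
  obtain ⟨hCf, hCl, hCq⟩ := hC
  refine ⟨aux_flat f g hf hg hfg hBf hCf, ?_, fun s hs ↦ ?_⟩
  · -- localization part
    let fS : LocalizedModule S A →ₗ[Localization S] LocalizedModule S B :=
      (IsLocalizedModule.map S (LocalizedModule.mkLinearMap S A)
        (LocalizedModule.mkLinearMap S B) f).extendScalarsOfIsLocalization S (Localization S)
    let gS : LocalizedModule S B →ₗ[Localization S] LocalizedModule S C :=
      (IsLocalizedModule.map S (LocalizedModule.mkLinearMap S B)
        (LocalizedModule.mkLinearMap S C) g).extendScalarsOfIsLocalization S (Localization S)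
    have hfSinj : Function.Injective fS :=
      IsLocalizedModule.map_injective S (LocalizedModule.mkLinearMap S A)
        (LocalizedModule.mkLinearMap S B) f hf
    have hgSsurj : Function.Surjective gS :=
      IsLocalizedModule.map_surjective S (LocalizedModule.mkLinearMap S B)
        (LocalizedModule.mkLinearMap S C) g hg
    have hexact : Function.Exact f g := LinearMap.exact_iff.mpr hfg.symm
    have hSexact := IsLocalizedModule.map_exact S (LocalizedModule.mkLinearMap S A)
      (LocalizedModule.mkLinearMap S B) (LocalizedModule.mkLinearMap S C) f g hexact
    have hrange : LinearMap.range fS = LinearMap.ker gS := by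
      ext x
      rw [LinearMap.mem_ker, LinearMap.mem_range]
      constructor
      · rintro ⟨y, rfl⟩
        exact (hSexact _).mpr ⟨y, rfl⟩
      · intro hx
        obtain ⟨y, hy⟩ := (hSexact x).mp hx
        exact ⟨y, hy⟩
    exact aux_proj fS gS hfSinj hgSsurj hrange hBl hCl
  · exact aux_mod f g hf hg hfg hCf s (hBq s hs) (hCq s hs)
end

section
/- Assume pd_R(R_S) ≤ 1. Then the class of S-strongly flat R-modules is closed under kernels of epimorphisms: if 0 → A → B → C → 0 is exact with B and C S-strongly flat, then A is S-strongly flat. -/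
open CategoryTheory

open CategoryTheory Limits

namespace SFAux

variable {R : Type} [CommRing R]

/-- Pad a morphism `d : P₁ ⟶ P₀` into a chain complex using generic syzygies. -/
noncomputable def resCx (P₀ P₁ : ModuleCat R) (d : P₁ ⟶ P₀) : ChainComplex (ModuleCat R) ℕ :=
  ChainComplex.mk' P₀ P₁ d (fun {X₀ X₁} f => ⟨Projective.syzygies f, Projective.d f, by simp only [Projective.d]; erw [Category.assoc, kernel.condition, comp_zero]⟩)

lemma resCx_d_1_0 (P₀ P₁ : ModuleCat R) (d : P₁ ⟶ P₀) : (resCx P₀ P₁ d).d 1 0 = d :=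
  ChainComplex.mk'_d_1_0 _ _ _ _

lemma resCx_exactAt_succ (P₀ P₁ : ModuleCat R) (d : P₁ ⟶ P₀) (n : ℕ) :
    (resCx P₀ P₁ d).ExactAt (n + 1) := by
  rw [HomologicalComplex.exactAt_iff' _ (n + 1 + 1) (n + 1) n (by simp) (by simp)]
  dsimp [resCx, HomologicalComplex.sc', HomologicalComplex.shortComplexFunctor',
      ChainComplex.mk', ChainComplex.mk, ChainComplex.of.d]
  simp only [Category.id_comp]
  match n with
  | 0 => apply exact_d_f
  | n + 1 => apply exact_d_f

/-- Build a projective resolution from a two-step presentation. -/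
noncomputable def resOf (P₀ P₁ : ModuleCat R) [Projective P₀] [Projective P₁] (d : P₁ ⟶ P₀)
    {Z : ModuleCat R} (ε : P₀ ⟶ Z) (hsurj : Function.Surjective ε)
    (hcomp : d ≫ ε = 0)
    (hex : ∀ x, ε x = 0 → ∃ y, d y = x) : ProjectiveResolution Z where
  complex := resCx P₀ P₁ d
  projective n := by
    match n with
    | 0 => exact ‹Projective P₀›
    | 1 => exact ‹Projective P₁›
    | (n+2) =>
      match n with
      | 0 => apply Projective.projective_over
      | (n+1) => apply Projective.projective_over
  π := (ChainComplex.toSingle₀Equiv _ _).symm ⟨ε, by rw [resCx_d_1_0]; exact hcomp⟩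
  quasiIso := ⟨fun n => by
    cases n with
    | zero =>
      rw [ChainComplex.quasiIsoAt₀_iff, ShortComplex.quasiIso_iff_of_zeros']
      · refine (ShortComplex.exact_and_epi_g_iff_of_iso
          (ShortComplex.isoMk (Iso.refl _) (Iso.refl _) (Iso.refl _)
            (by simp [resCx_d_1_0]) (by simp) :
            _ ≅ ShortComplex.mk d ε hcomp)).2 ⟨?_, ?_⟩
        · rw [ShortComplex.moduleCat_exact_iff]
          intro x hx
          exact hex x hx
        · exact (ModuleCat.epi_iff_surjective ε).mpr hsurj
      all_goals rfl
    | succ n =>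
      rw [quasiIsoAt_iff_exactAt']
      · apply resCx_exactAt_succ
      · apply ChainComplex.exactAt_succ_single_obj⟩

end SFAux
namespace SFAux

variable {R : Type} [CommRing R]

lemma happ {M N : Type} [AddCommGroup M] [Module R M] [AddCommGroup N] [Module R N]
    {a b : M →ₗ[R] N} (h : a = b) (z : M) : a z = b z := by rw [h]

/-- Factor a linear map vanishing on the kernel of a surjection. -/
lemma factor_surj {M N Y : Type} [AddCommGroup M] [Module R M] [AddCommGroup N] [Module R N]
    [AddCommGroup Y] [Module R Y] (e : M →ₗ[R] N) (he : Function.Surjective e)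
    (v : M →ₗ[R] Y) (hv : ∀ x, e x = 0 → v x = 0) :
    ∃ h : N →ₗ[R] Y, h.comp e = v := by
  refine ⟨((LinearMap.ker e).liftQ v (fun x hx => hv x hx)).comp
    (e.quotKerEquivOfSurjective he).symm.toLinearMap, ?_⟩
  ext x
  have h1 : (e.quotKerEquivOfSurjective he).symm (e x) = Submodule.Quotient.mk x := by
    rw [LinearEquiv.symm_apply_eq]
    rfl
  simp [h1]
  rfl

/-- `Ext¹(X, Y) = 0` iff maps to `Y` from the kernel of a projective presentation of `X`
extend to the presentation. -/
lemma ext1Zero_iff_lift (X Y K : Type) [AddCommGroup X] [Module R X] [AddCommGroup Y] [Module R Y]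
    [AddCommGroup K] [Module R K] (P : ModuleCat R) [Projective P]
    (ι : K →ₗ[R] P) (ε : (P : Type) →ₗ[R] X)
    (hι : Function.Injective ι) (hε : Function.Surjective ε)
    (hrange : LinearMap.range ι = LinearMap.ker ε) :
    ext1Zero R X Y ↔ ∀ φ : K →ₗ[R] Y, ∃ ψ : (P : Type) →ₗ[R] Y, ψ.comp ι = φ := by
  classical
  haveI : Projective (ModuleCat.of R (K →₀ R)) :=
    ModuleCat.projective_of_free (R := R) Finsupp.basisSingleOne
  set P₁ : ModuleCat R := ModuleCat.of R (K →₀ R) with hP₁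
  let q : (K →₀ R) →ₗ[R] K := Finsupp.linearCombination R _root_.id
  have hq : ∀ k : K, q (Finsupp.single k 1) = k := fun k => by
    simp [q, Finsupp.linearCombination_single]
  have hqs : Function.Surjective q := fun k => ⟨Finsupp.single k 1, hq k⟩
  let dl : (P₁ : Type) →ₗ[R] (P : Type) := ι.comp q
  let d : P₁ ⟶ P := ModuleCat.ofHom dl
  let εm : P ⟶ ModuleCat.of R X := ModuleCat.ofHom ε
  have hcomp : d ≫ εm = 0 := by
    refine ModuleCat.hom_ext (LinearMap.ext fun y => ?_)
    have : ι (q y) ∈ LinearMap.ker ε := hrange ▸ LinearMap.mem_range_self ι (q y)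
    exact this
  have hex : ∀ x : (P : Type), εm x = 0 → ∃ y, d y = x := by
    intro x hx
    have : x ∈ LinearMap.range ι := hrange ▸ (show x ∈ LinearMap.ker ε from hx)
    obtain ⟨k, hk⟩ := this
    exact ⟨Finsupp.single k 1, by show ι (q (Finsupp.single k 1)) = x; rw [hq k]; exact hk⟩
  let res : ProjectiveResolution (ModuleCat.of R X) := resOf P P₁ d εm hε hcomp hex
  have hd10 : res.complex.d 1 0 = d := resCx_d_1_0 _ _ _
  -- transfer Subsingleton along the iso with homology
  let e := (res.isoExt (R := R) 1 (ModuleCat.of R Y)).toLinearEquiv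
  let T := res.complex.linearYonedaObj R (ModuleCat.of R Y)
  have h1 : ext1Zero R X Y ↔ Subsingleton (T.homology 1) := e.toEquiv.subsingleton_congr
  have h2 : Subsingleton (T.homology 1) ↔ T.ExactAt 1 := by
    constructor
    · intro hs
      rw [HomologicalComplex.exactAt_iff_isZero_homology]
      exact ModuleCat.isZero_of_subsingleton _
    · intro hT
      rw [HomologicalComplex.exactAt_iff_isZero_homology] at hT
      have e2 := (hT.iso (ModuleCat.isZero_of_subsingleton
        (ModuleCat.of R PUnit))).toLinearEquiv
      exact e2.toEquiv.subsingleton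
  rw [h1, h2, HomologicalComplex.exactAt_iff' T 0 1 2 (by simp) (by simp),
    ShortComplex.moduleCat_exact_iff]
  have hTf : ∀ u : (P : Type) →ₗ[R] Y, (T.sc' 0 1 2).f (show (T.sc' 0 1 2).X₁ from ModuleCat.ofHom u) =
      (res.complex.d 1 0 ≫ (show res.complex.X 0 ⟶ ModuleCat.of R Y from ModuleCat.ofHom u) :
        res.complex.X 1 ⟶ ModuleCat.of R Y) := fun _ => rfl
  have hTg : ∀ v : (P₁ : Type) →ₗ[R] Y, (T.sc' 0 1 2).g
        (show (T.sc' 0 1 2).X₂ from ModuleCat.ofHom v) =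
      (res.complex.d 2 1 ≫ (show res.complex.X 1 ⟶ ModuleCat.of R Y from ModuleCat.ofHom v) :
        res.complex.X 2 ⟶ ModuleCat.of R Y) := fun _ => rfl
  have hd10' : ∀ z : (P₁ : Type), res.complex.d 1 0 z = ι (q z) := fun z => happ (congrArg ModuleCat.Hom.hom hd10) z
  -- q ∘ d₂₁ = 0
  have hqd : ∀ z, q (res.complex.d 2 1 z) = 0 := by
    intro z
    apply hι
    have h0 : res.complex.d 2 1 ≫ res.complex.d 1 0 = 0 := res.complex.d_comp_d 2 1 0
    have h2 : res.complex.d 1 0 (res.complex.d 2 1 z) = 0 := happ (congrArg ModuleCat.Hom.hom h0) z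
    have h2' := (hd10' (res.complex.d 2 1 z)).symm.trans h2
    rw [map_zero]
    exact h2'
  constructor
  · intro hexact φ
    have hx : (T.sc' 0 1 2).g (show (T.sc' 0 1 2).X₂ from
        ModuleCat.ofHom (φ.comp q : (P₁ : Type) →ₗ[R] Y)) = 0 := by
      rw [hTg]
      refine ModuleCat.hom_ext (LinearMap.ext fun z => ?_)
      show φ (q (res.complex.d 2 1 z)) = 0
      rw [hqd z, map_zero]
    obtain ⟨u, hu⟩ := hexact _ hx
    let uu : (P : Type) →ₗ[R] Y := (show res.complex.X 0 ⟶ ModuleCat.of R Y from u).hom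
    refine ⟨uu, ?_⟩
    refine LinearMap.ext fun k => ?_
    have hu' : (T.sc' 0 1 2).f (show (T.sc' 0 1 2).X₁ from ModuleCat.ofHom uu) = (show (T.sc' 0 1 2).X₂ from ModuleCat.ofHom (φ.comp q : (P₁ : Type) →ₗ[R] Y)) := hu
    rw [hTf uu] at hu'
    have h3 : uu (res.complex.d 1 0 (Finsupp.single k 1)) = φ (q (Finsupp.single k 1)) :=
      happ (congrArg ModuleCat.Hom.hom hu') (Finsupp.single k 1)
    rw [hd10', hq k] at h3
    exact h3
  · intro hlift v hv
    let vv : (P₁ : Type) →ₗ[R] Y := (show res.complex.X 1 ⟶ ModuleCat.of R Y from v).hom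
    have hgv : (res.complex.d 2 1 ≫ (show res.complex.X 1 ⟶ ModuleCat.of R Y from ModuleCat.ofHom vv) :
        res.complex.X 2 ⟶ ModuleCat.of R Y) = 0 := by
      have h8 : (T.sc' 0 1 2).g (show (T.sc' 0 1 2).X₂ from ModuleCat.ofHom vv) = 0 := hv
      rw [hTg] at h8
      exact h8
    have hker : ∀ x, q x = 0 → vv x = 0 := by
      intro x hx
      have hd10x : res.complex.d 1 0 x = 0 := by
        rw [hd10', hx, map_zero]
        rfl
      have hre := resCx_exactAt_succ P P₁ d 0
      rw [HomologicalComplex.exactAt_iff' _ 2 1 0 (by simp) (by simp),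
        ShortComplex.moduleCat_exact_iff] at hre
      obtain ⟨y, hy⟩ := hre x hd10x
      have h5 : vv (res.complex.d 2 1 y) = 0 := happ (congrArg ModuleCat.Hom.hom hgv) y
      have hy' : res.complex.d 2 1 y = x := hy
      rw [← hy']
      exact h5
    obtain ⟨φ, hφ⟩ := factor_surj q hqs vv hker
    obtain ⟨ψ, hψ⟩ := hlift φ
    refine ⟨show (T.sc' 0 1 2).X₁ from ModuleCat.ofHom ψ, ?_⟩
    have h9 := hTf ψ
    refine h9.trans ?_
    show _ = (show (T.sc' 0 1 2).X₂ from ModuleCat.ofHom vv)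
    refine ModuleCat.hom_ext (LinearMap.ext fun x => ?_)
    show ψ (res.complex.d 1 0 x) = vv x
    rw [hd10' x]
    have h7 : ψ (ι (q x)) = φ (q x) := happ hψ (q x)
    rw [h7]
    exact happ hφ x

end SFAux
namespace SFAux

variable {R : Type} [CommRing R]

lemma ofInj_cancel {M N : Type} [AddCommGroup M] [Module R M] [AddCommGroup N] [Module R N]
    (w : M →ₗ[R] N) (hw : Function.Injective w) (y : LinearMap.range w) :
    w ((LinearEquiv.ofInjective w hw).symm y) = (y : N) := by
  conv_rhs => rw [← (LinearEquiv.ofInjective w hw).apply_symm_apply y]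
  rw [LinearEquiv.ofInjective_apply]

end SFAux

set_option maxHeartbeats 1000000 in
theorem stmt_16 (R : Type) [CommRing R] (S : Submonoid R)
    (hpd : pdLeOne R (Localization S))
    (A B C : Type) [AddCommGroup A] [Module R A] [AddCommGroup B] [Module R B]
    [AddCommGroup C] [Module R C]
    (f : A →ₗ[R] B) (g : B →ₗ[R] C)
    (hf : Function.Injective f) (hg : Function.Surjective g)
    (hfg : LinearMap.range f = LinearMap.ker g)
    (hB : SStronglyFlat R S B) (hC : SStronglyFlat R S C) :
    SStronglyFlat R S A := by
  classical
  intro C' instAG instM hC'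
  -- embed C' into an injective module I, with quotient Q
  let I : ModuleCat R := Injective.under (ModuleCat.of R C')
  let jm : ModuleCat.of R C' ⟶ I := Injective.ι _
  let j : C' →ₗ[R] (I : Type) := jm.hom
  have hj : Function.Injective j := (ModuleCat.mono_iff_injective jm).mp inferInstance
  haveI hIobj : Injective (ModuleCat.of R (I : Type)) := inferInstanceAs (Injective I)
  haveI hIinj : Module.Injective R (I : Type) :=
    Module.injective_module_of_injective_object R (I : Type)
  let Q := (I : Type) ⧸ LinearMap.range j
  let π : (I : Type) →ₗ[R] Q := (LinearMap.range j).mkQ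
  have hπ : Function.Surjective π := Submodule.mkQ_surjective _
  have hkerπ : ∀ z : (I : Type), π z = 0 → z ∈ LinearMap.range j := by
    intro z hz
    rwa [← LinearMap.mem_ker, Submodule.ker_mkQ] at hz
  have hπj : ∀ c, π (j c) = 0 := fun c =>
    (Submodule.Quotient.mk_eq_zero _).mpr (LinearMap.mem_range_self j c)
  -- Step 1 : Q is S-weakly cotorsion (uses pd ≤ 1)
  obtain ⟨P₀, P₁, dP, gP, hP₀, hP₁, hdinj, hgsurj, hrangeP⟩ := hpd
  haveI := hP₀
  haveI := hP₁
  have hQwc : SWeaklyCotorsion R S Q := by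
    show ext1Zero R (Localization S) Q
    rw [SFAux.ext1Zero_iff_lift (Localization S) Q (P₁ : Type) P₀
      dP.hom gP.hom
      hdinj hgsurj hrangeP]
    intro φ
    haveI : Projective (ModuleCat.of R (P₁ : Type)) := hP₁
    haveI : Module.Projective R (P₁ : Type) := (IsProjective.iff_projective _).mpr this
    obtain ⟨φ', hφ'⟩ := Module.projective_lifting_property π φ hπ
    obtain ⟨ψ', hψ'⟩ := Module.Injective.extension_property R (I : Type) (P₁ : Type) (P₀ : Type)
      dP.hom hdinj φ'
    refine ⟨π.comp ψ', LinearMap.ext fun z => ?_⟩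
    show π (ψ' (dP z)) = φ z
    have h1 : ψ' (dP z) = φ' z := SFAux.happ hψ' z
    have h2 : π (φ' z) = φ z := SFAux.happ hφ' z
    rw [h1, h2]
  have hQe : ext1Zero R C Q := hC Q hQwc
  have hBe : ext1Zero R B C' := hB C' hC'
  -- presentations
  let PA := (A →₀ R)
  let ε : PA →ₗ[R] A := Finsupp.linearCombination R _root_.id
  have hε : Function.Surjective ε := fun a =>
    ⟨Finsupp.single a 1, by
      show Finsupp.linearCombination R _root_.id (Finsupp.single a 1) = a
      rw [Finsupp.linearCombination_single, one_smul, _root_.id]⟩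
  let KA := LinearMap.ker ε
  have hgdup : Function.Surjective g := hg
  choose sec hsec using hgdup
  let τ : (C →₀ R) →ₗ[R] B := Finsupp.linearCombination R sec
  let F := PA × (C →₀ R)
  let σ : F →ₗ[R] B := LinearMap.coprod (f.comp ε) τ
  have hσinl : ∀ x : PA, σ (x, 0) = f (ε x) := fun x => by
    show f (ε x) + τ 0 = f (ε x)
    rw [map_zero, add_zero]
  have hσ : Function.Surjective σ := by
    intro b
    have h1 : g (b - τ (Finsupp.single (g b) 1)) = 0 := by
      have ht : τ (Finsupp.single (g b) 1) = sec (g b) := by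
        show Finsupp.linearCombination R sec (Finsupp.single (g b) 1) = sec (g b)
        rw [Finsupp.linearCombination_single, one_smul]
      rw [map_sub, ht, hsec, sub_self]
    have h2 : b - τ (Finsupp.single (g b) 1) ∈ LinearMap.range f := by
      rw [hfg]
      exact h1
    obtain ⟨a, ha⟩ := h2
    obtain ⟨x, hx⟩ := hε a
    refine ⟨(x, Finsupp.single (g b) 1), ?_⟩
    show f (ε x) + τ (Finsupp.single (g b) 1) = b
    rw [hx, ha]
    abel
  let σ' : F →ₗ[R] C := g.comp σ
  have hσ' : Function.Surjective σ' := fun c => by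
    obtain ⟨b, hb⟩ := hσ (sec c)
    exact ⟨b, by show g (σ b) = c; rw [hb, hsec]⟩
  let L := LinearMap.ker σ'
  let N := LinearMap.ker σ
  have hLf : ∀ x : L, σ (x : F) ∈ LinearMap.range f := fun x => by
    rw [hfg]
    exact x.2
  let eA : A ≃ₗ[R] LinearMap.range f := LinearEquiv.ofInjective f hf
  let ρ : L →ₗ[R] A := eA.symm.toLinearMap.comp
    (LinearMap.codRestrict (LinearMap.range f) (σ.comp L.subtype) hLf)
  have hρ : ∀ x : L, f (ρ x) = σ (x : F) := fun x => SFAux.ofInj_cancel f hf _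
  let eJ : C' ≃ₗ[R] LinearMap.range j := LinearEquiv.ofInjective j hj
  have hJ : ∀ y : LinearMap.range j, j (eJ.symm y) = (y : (I : Type)) :=
    fun y => SFAux.ofInj_cancel j hj y
  -- projectivity instances
  haveI hMPA : Module.Projective R PA := inferInstance
  haveI hMF : Module.Projective R F := inferInstance
  haveI : Module.Projective R ((ModuleCat.of R PA : ModuleCat R) : Type) :=
    inferInstanceAs (Module.Projective R PA)
  haveI : Module.Projective R ((ModuleCat.of R F : ModuleCat R) : Type) :=
    inferInstanceAs (Module.Projective R F)
  haveI : Projective (ModuleCat.of R PA) := (IsProjective.iff_projective _).mp hMPA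
  haveI : Projective (ModuleCat.of R F) := (IsProjective.iff_projective _).mp hMF
  -- conclude via the lifting characterization for A
  rw [show (ext1Zero R A C') = _ from rfl]
  rw [SFAux.ext1Zero_iff_lift A C' (KA : Type) (ModuleCat.of R PA) KA.subtype ε
    (Submodule.injective_subtype KA) hε (Submodule.range_subtype KA)]
  intro φ
  -- 1. extend j∘φ along KA ↪ PA using injectivity of I
  obtain ⟨η, hη⟩ := Module.Injective.extension_property R (I : Type) (KA : Type) PA
    KA.subtype (Submodule.injective_subtype KA) (j.comp φ)
  -- 2. factor π∘η through ε
  obtain ⟨h, hh⟩ := SFAux.factor_surj ε hε (π.comp η) (by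
    intro x hx
    have hmem : x ∈ KA := hx
    have h1 : η x = j (φ ⟨x, hmem⟩) := SFAux.happ hη (⟨x, hmem⟩ : KA)
    show π (η x) = 0
    rw [h1]
    exact hπj _)
  -- 3. extend h∘ρ along L ↪ F using Ext¹(C,Q) = 0
  have hCQ := (SFAux.ext1Zero_iff_lift C Q (L : Type) (ModuleCat.of R F) L.subtype σ'
    (Submodule.injective_subtype L) hσ' (Submodule.range_subtype L)).mp hQe
  obtain ⟨Θ, hΘ⟩ := hCQ (h.comp ρ)
  -- 4. lift Θ along π using projectivity of F
  obtain ⟨Θt, hΘt⟩ := Module.projective_lifting_property π Θ hπ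
  -- 5. the difference D lands in the image of j
  let inl : PA →ₗ[R] F := LinearMap.inl R PA (C →₀ R)
  have hinlL : ∀ x : PA, inl x ∈ L := fun x => by
    show g (σ (x, 0)) = 0
    rw [hσinl]
    have : f (ε x) ∈ LinearMap.ker g := hfg ▸ LinearMap.mem_range_self f (ε x)
    exact this
  let D : PA →ₗ[R] (I : Type) := Θt.comp inl - η
  have hDπ : ∀ x, π (D x) = 0 := by
    intro x
    show π (Θt (inl x) - η x) = 0
    have h1 : π (Θt (inl x)) = Θ (inl x) := SFAux.happ hΘt (inl x)
    have h2 : Θ (inl x) = h (ρ ⟨inl x, hinlL x⟩) := SFAux.happ hΘ (⟨inl x, hinlL x⟩ : L)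
    have h3 : ρ ⟨inl x, hinlL x⟩ = ε x := by
      apply hf
      rw [hρ]
      exact hσinl x
    have h4 : h (ε x) = π (η x) := SFAux.happ hh x
    rw [map_sub, h1, h2, h3, h4, sub_self]
  let ψ₀ : PA →ₗ[R] C' := eJ.symm.toLinearMap.comp
    (LinearMap.codRestrict (LinearMap.range j) D (fun x => hkerπ _ (hDπ x)))
  have hψ₀ : ∀ x, j (ψ₀ x) = D x := fun x => hJ _
  -- 6. Θt restricted to N lands in the image of j
  have hNL : ∀ x : F, x ∈ N → x ∈ L := fun x hx => by
    show g (σ x) = 0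
    rw [show σ x = 0 from hx, map_zero]
  have hΘtN : ∀ x : N, Θt (x : F) ∈ LinearMap.range j := by
    intro x
    apply hkerπ
    have h1 : π (Θt (x : F)) = Θ (x : F) := SFAux.happ hΘt (x : F)
    have h2 : Θ ((⟨(x : F), hNL _ x.2⟩ : L) : F) = h (ρ ⟨(x : F), hNL _ x.2⟩) :=
      SFAux.happ hΘ (⟨(x : F), hNL _ x.2⟩ : L)
    have h3 : ρ (⟨(x : F), hNL _ x.2⟩ : L) = 0 := by
      apply hf
      rw [hρ, map_zero]
      exact x.2
    rw [h1]
    have h2' : Θ (x : F) = h (ρ ⟨(x : F), hNL _ x.2⟩) := h2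
    rw [h2', h3, map_zero]
  let μ : (N : Type) →ₗ[R] C' := eJ.symm.toLinearMap.comp
    (LinearMap.codRestrict (LinearMap.range j) (Θt.comp N.subtype) hΘtN)
  have hμ : ∀ x : N, j (μ x) = Θt (x : F) := fun x => hJ _
  -- 7. extend μ along N ↪ F using Ext¹(B,C') = 0
  have hBC := (SFAux.ext1Zero_iff_lift B C' (N : Type) (ModuleCat.of R F) N.subtype σ
    (Submodule.injective_subtype N) hσ (Submodule.range_subtype N)).mp hBe
  obtain ⟨Mb, hMb⟩ := hBC μ
  -- 8. assemble the extension of φ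
  refine ⟨Mb.comp inl - ψ₀, LinearMap.ext fun k => ?_⟩
  apply hj
  have hmemN : inl (k : PA) ∈ N := by
    show σ ((k : PA), 0) = 0
    rw [hσinl, show ε (k : PA) = 0 from k.2, map_zero]
  have h1 : j (Mb (inl (k : PA))) = Θt (inl (k : PA)) := by
    have h0 : Mb (inl (k : PA)) = μ ⟨inl (k : PA), hmemN⟩ :=
      SFAux.happ hMb (⟨inl (k : PA), hmemN⟩ : N)
    rw [h0]
    exact hμ _
  have h2 : j (ψ₀ (k : PA)) = Θt (inl (k : PA)) - j (φ k) := by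
    rw [hψ₀]
    show Θt (inl (k : PA)) - η (k : PA) = _
    have h5 : η (k : PA) = j (φ k) := SFAux.happ hη k
    rw [h5]
  show j (Mb (inl (k : PA)) - ψ₀ (k : PA)) = j (φ k)
  rw [map_sub, h1, h2]
  abel
end

section
/- If Z is a cochain complex of R-modules that is a filtered colimit (in the category of complexes) of contractible complexes of projective R-modules, then Z is acyclic and every kernel Ker δⁱ is a flat R-module. -/
open CategoryTheory Limits TensorProduct

universe u

section Helpers

variable {R : Type} [CommRing R]

lemma stmt17_homotopy_apply (C' : CochainComplex (ModuleCat.{u} R) ℤ) (h : Homotopy (𝟙 C') 0)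
    (n : ℤ) (u : C'.X n) :
    u = h.hom (n+1) n (C'.d n (n+1) u) + C'.d (n-1) n (h.hom n (n-1) u) := by
  have hc := h.comm n
  rw [dNext_eq _ (show (ComplexShape.up ℤ).Rel n (n+1) by simp),
    prevD_eq _ (show (ComplexShape.up ℤ).Rel (n-1) n by simp)] at hc
  have := LinearMap.congr_fun (congrArg ModuleCat.Hom.hom hc) u
  simpa using this

lemma stmt17_contr_exact (C' : CochainComplex (ModuleCat.{u} R) ℤ) (h : Homotopy (𝟙 C') 0) (n : ℤ)
    (u : C'.X n) (hu : C'.d n (n+1) u = 0) :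
    C'.d (n-1) n (h.hom n (n-1) u) = u := by
  conv_rhs => rw [stmt17_homotopy_apply C' h n u]
  rw [hu]
  simp

lemma stmt17_contr_ker_projective (C' : CochainComplex (ModuleCat.{u} R) ℤ)
    (h : Homotopy (𝟙 C') 0) (n : ℤ) [Module.Projective R (C'.X n)] :
    Module.Projective R (LinearMap.ker (C'.d n (n+1)).hom) := by
  set P := LinearMap.ker (C'.d n (n+1)).hom
  refine Module.Projective.of_split (M := C'.X n) P.subtype
    (LinearMap.codRestrict P ((C'.d (n-1) n).hom.comp (h.hom n (n-1)).hom) ?_) ?_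
  · intro u
    show (C'.d n (n+1)) ((C'.d (n-1) n) (h.hom n (n-1) u)) = 0
    have := LinearMap.congr_fun (congrArg ModuleCat.Hom.hom (C'.d_comp_d (n-1) n (n+1))) (h.hom n (n-1) u)
    rw [ModuleCat.hom_comp, LinearMap.comp_apply] at this
    exact this
  · ext ⟨u, hu⟩
    exact stmt17_contr_exact C' h n u hu

variable {J : Type u} [SmallCategory J] [IsFiltered J]

noncomputable instance stmt17_pres :
    PreservesColimitsOfShape J (forget (ModuleCat.{u} R)) :=
  ⟨fun {F} => preservesColimit_of_preserves_colimit_cocone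
    (ModuleCat.FilteredColimits.colimitCoconeIsColimit.{u, 0} F)
    (Types.TypeMax.colimitCoconeIsColimit.{u, u} (F ⋙ forget (ModuleCat R)))⟩

omit [IsFiltered J] in
lemma stmt17_cocone_nat (F : J ⥤ ModuleCat.{u} R) (c : Cocone F) {j k : J} (g : j ⟶ k)
    (y : F.obj j) : c.ι.app k (F.map g y) = c.ι.app j y := by
  have := LinearMap.congr_fun (congrArg ModuleCat.Hom.hom (c.ι.naturality g)) y
  simp only [Functor.const_obj_map, Category.comp_id] at this
  rw [ModuleCat.hom_comp, LinearMap.comp_apply] at this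
  exact this

lemma stmt17_list_zero (F : J ⥤ ModuleCat.{u} R) {c : Cocone F} (hc : IsColimit c) (S : J)
    (l : List (F.obj S)) (hl : ∀ u ∈ l, c.ι.app S u = 0) :
    ∃ (T : J) (g : S ⟶ T), ∀ u ∈ l, F.map g u = 0 := by
  induction l with
  | nil => exact ⟨S, 𝟙 S, by simp⟩
  | cons a l ih =>
    obtain ⟨T, g, hg⟩ := ih (fun u hu => hl u (List.mem_cons_of_mem _ hu))
    have h0 : c.ι.app T (F.map g a) = c.ι.app T ((0 : F.obj S ⟶ F.obj T) a) := by
      rw [stmt17_cocone_nat F c g a, hl a (List.mem_cons_self)]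
      rw [show (ConcreteCategory.hom (0 : F.obj S ⟶ F.obj T)) a = 0 from rfl, map_zero]
    obtain ⟨k, f, f', hff'⟩ := Limits.Concrete.isColimit_exists_of_rep_eq F hc _ _ h0
    rw [show (ConcreteCategory.hom (0 : F.obj S ⟶ F.obj T)) a = 0 from rfl, map_zero] at hff'
    refine ⟨k, g ≫ f, ?_⟩
    intro u hu
    rcases List.mem_cons.mp hu with rfl | hu
    · calc F.map (g ≫ f) u = F.map f (F.map g u) := by rw [F.map_comp]; rfl
        _ = 0 := hff'
    · calc F.map (g ≫ f) u = F.map f (F.map g u) := by rw [F.map_comp]; rfl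
        _ = F.map f 0 := by rw [hg u hu]
        _ = 0 := map_zero _

end Helpers

section Aux

variable {R : Type} [CommRing R] {J : Type u} [SmallCategory J] [IsFiltered J]

set_option maxHeartbeats 1000000 in
lemma stmt17_aux (D : J ⥤ CochainComplex (ModuleCat.{u} R) ℤ)
    (hcontr : ∀ j : J, Nonempty (Homotopy (𝟙 (D.obj j)) 0))
    (hproj : ∀ (j : J) (i : ℤ), Module.Projective R ((D.obj j).X i))
    (c : Cocone D) (hc : IsColimit c) :
    (∀ i : ℤ, c.pt.ExactAt i) ∧
      ∀ i : ℤ, Module.Flat R ↥(LinearMap.ker (c.pt.d i (i + 1)).hom) := by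
  classical
  -- degreewise cocones
  let F : ℤ → (J ⥤ ModuleCat.{u} R) :=
    fun n => D ⋙ HomologicalComplex.eval _ _ n
  let cn : ∀ n : ℤ, Cocone (F n) :=
    fun n => (HomologicalComplex.eval (ModuleCat R) (ComplexShape.up ℤ) n).mapCocone c
  have hcn : ∀ n : ℤ, IsColimit (cn n) := fun n => isColimitOfPreserves _ hc
  -- commutation with differentials, elementwise
  have hcomm : ∀ (n m : ℤ) (j : J) (y : (D.obj j).X n),
      c.pt.d n m ((cn n).ι.app j y) = (cn m).ι.app j ((D.obj j).d n m y) := by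
    intro n m j y
    have := LinearMap.congr_fun (congrArg ModuleCat.Hom.hom ((c.ι.app j).comm n m)) y
    rw [ModuleCat.hom_comp, ModuleCat.hom_comp, LinearMap.comp_apply, LinearMap.comp_apply] at this
    exact this
  have hcommD : ∀ (n m : ℤ) {j k : J} (g : j ⟶ k) (y : (D.obj j).X n),
      (D.obj k).d n m ((D.map g).f n y) = (D.map g).f m ((D.obj j).d n m y) := by
    intro n m j k g y
    have := LinearMap.congr_fun (congrArg ModuleCat.Hom.hom ((D.map g).comm n m)) y
    rw [ModuleCat.hom_comp, ModuleCat.hom_comp, LinearMap.comp_apply, LinearMap.comp_apply] at this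
    exact this
  -- lifting finitely many cycles to a common stage
  have key : ∀ (n : ℤ) (ι' : Type u) (_ : Fintype ι') (x : ι' → c.pt.X n)
      (_ : ∀ i, c.pt.d n (n+1) (x i) = 0),
      ∃ (k : J) (y : ι' → (D.obj k).X n),
        (∀ i, (D.obj k).d n (n+1) (y i) = 0) ∧ (∀ i, (cn n).ι.app k (y i) = x i) := by
    intro n ι' _ x hx
    have hrep : ∀ i : ι', ∃ (j : J) (y : (D.obj j).X n), (cn n).ι.app j y = x i :=
      fun i => Limits.Concrete.isColimit_exists_rep (F n) (hcn n) (x i)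
    choose jj yy hyy using hrep
    obtain ⟨S, hS⟩ := IsFiltered.sup_objs_exists (Finset.image jj Finset.univ)
    have hgS : ∀ i : ι', Nonempty (jj i ⟶ S) :=
      fun i => hS (Finset.mem_image_of_mem jj (Finset.mem_univ i))
    let g : ∀ i : ι', jj i ⟶ S := fun i => (hgS i).some
    let z : ι' → (D.obj S).X n := fun i => (D.map (g i)).f n (yy i)
    have hz : ∀ i, (cn n).ι.app S (z i) = x i := by
      intro i
      rw [← hyy i]
      exact stmt17_cocone_nat (F n) (cn n) (g i) (yy i)
    have hdz : ∀ i : ι', (cn (n+1)).ι.app S ((D.obj S).d n (n+1) (z i)) = 0 := by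
      intro i
      rw [← hcomm n (n+1) S (z i), hz i, hx i]
      rfl
    obtain ⟨T, gT, hgT⟩ := stmt17_list_zero (F (n+1)) (hcn (n+1)) S
      ((Finset.univ : Finset ι').toList.map (fun i => (D.obj S).d n (n+1) (z i)))
      (by
        intro u hu
        obtain ⟨i, _, rfl⟩ := List.mem_map.mp hu
        exact hdz i)
    refine ⟨T, fun i => (D.map gT).f n (z i), ?_, ?_⟩
    · intro i
      rw [hcommD n (n+1) gT (z i)]
      exact hgT _ (List.mem_map.mpr ⟨i, by simp, rfl⟩)
    · intro i
      rw [← hz i]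
      exact stmt17_cocone_nat (F n) (cn n) gT (z i)
  -- killing a single element of a stage which maps to zero
  have key2 : ∀ (n : ℤ) (S : J) (v : (D.obj S).X n), (cn n).ι.app S v = 0 →
      ∃ (T : J) (gT : S ⟶ T), (D.map gT).f n v = 0 := by
    intro n S v hv
    obtain ⟨T, gT, h⟩ := stmt17_list_zero (F n) (hcn n) S [v] (fun u hu => by rw [List.mem_singleton.mp hu]; exact hv)
    exact ⟨T, gT, h v (List.mem_singleton_self v)⟩
  constructor
  · -- exactness
    intro n
    rw [HomologicalComplex.exactAt_iff' (K := c.pt) (i := n-1) (j := n) (k := n+1)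
      (CochainComplex.prev ℤ n) (CochainComplex.next ℤ n),
      ShortComplex.moduleCat_exact_iff]
    intro (x : c.pt.X n) (hx : c.pt.d n (n+1) x = 0)
    obtain ⟨k, y, hdy, hy⟩ := key n PUnit.{u+1} inferInstance (fun _ => x) (fun _ => hx)
    obtain ⟨h⟩ := hcontr k
    have hex := stmt17_contr_exact (D.obj k) h n (y PUnit.unit) (hdy PUnit.unit)
    refine ⟨(cn (n-1)).ι.app k (h.hom n (n-1) (y PUnit.unit)), ?_⟩
    show c.pt.d (n-1) n ((cn (n-1)).ι.app k (h.hom n (n-1) (y PUnit.unit))) = x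
    rw [hcomm (n-1) n k, hex, hy PUnit.unit]
  · -- flatness of kernels
    intro n
    rw [Module.Flat.iff_rTensor_injective']
    intro I
    rw [injective_iff_map_eq_zero]
    intro t ht
    obtain ⟨s, rfl⟩ := TensorProduct.exists_finset t
    let ι' : Type u := {p // p ∈ s}
    -- the relation holds in the kernel
    have hrel : ∑ p ∈ s, (p.1 : R) • p.2 = 0 := by
      have h1 : (TensorProduct.lid R ↥(LinearMap.ker (c.pt.d n (n+1)).hom)).toLinearMap.comp
          (LinearMap.rTensor _ I.subtype) (∑ p ∈ s, p.1 ⊗ₜ[R] p.2) = 0 := by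
        rw [LinearMap.comp_apply]
        erw [ht]
        rw [map_zero]
      rw [map_sum] at h1
      simpa using h1
    have hrelZ : ∑ p ∈ s, (p.1 : R) • ((p.2 : _) : c.pt.X n) = 0 := by
      have := congrArg Subtype.val hrel
      simpa using this
    -- lift the underlying elements
    obtain ⟨k, y, hdy, hy⟩ := key n ι' inferInstance
      (fun p => ((p.1.2 : _) : c.pt.X n)) (fun p => LinearMap.mem_ker.mp p.1.2.2)
    -- push the relation to zero at a further stage
    have hsum0 : (cn n).ι.app k (∑ p : ι', (p.1.1 : R) • y p) = 0 := by
      refine (map_sum _ _ _).trans ?_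
      calc (∑ p : ι', (cn n).ι.app k ((p.1.1 : R) • y p) : c.pt.X n)
          = (∑ p : ι', (p.1.1 : R) • ((cn n).ι.app k (y p)) : c.pt.X n) :=
            Finset.sum_congr rfl (fun p _ => map_smul _ _ _)
        _ = ∑ p : ι', (p.1.1 : R) • ((p.1.2 : _) : c.pt.X n) :=
            Finset.sum_congr rfl (fun p _ => congrArg ((p.1.1 : R) • ·) (hy p))
        _ = ∑ p ∈ s, (p.1 : R) • ((p.2 : _) : c.pt.X n) :=
            Finset.sum_coe_sort s (fun p => (p.1 : R) • ((p.2 : _) : c.pt.X n))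
        _ = 0 := hrelZ
    obtain ⟨T, gT, hgT⟩ := key2 n k _ hsum0
    -- the final stage elements
    let w : ι' → (D.obj T).X n := fun p => (D.map gT).f n (y p)
    have hdw : ∀ p, (D.obj T).d n (n+1) (w p) = 0 := by
      intro p
      show (D.obj T).d n (n+1) ((D.map gT).f n (y p)) = 0
      rw [hcommD n (n+1) gT (y p), hdy p, map_zero]
    have hsumw : ∑ p : ι', (p.1.1 : R) • w p = 0 := by
      calc ∑ p : ι', (p.1.1 : R) • w p
          = (D.map gT).f n (∑ p : ι', (p.1.1 : R) • y p) := by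
            rw [map_sum]
            exact Finset.sum_congr rfl (fun p _ => (map_smul _ _ _).symm)
        _ = 0 := hgT
    have hw : ∀ p : ι', (cn n).ι.app T (w p) = ((p.1.2 : _) : c.pt.X n) := by
      intro p
      exact (stmt17_cocone_nat (F n) (cn n) gT (y p)).trans (hy p)
    -- the projective hence flat kernel at the final stage
    haveI := hproj T n
    haveI hPproj : Module.Projective R (LinearMap.ker ((D.obj T).d n (n+1)).hom) :=
      stmt17_contr_ker_projective (D.obj T) (hcontr T).some n
    haveI hPflat : Module.Flat R (LinearMap.ker ((D.obj T).d n (n+1)).hom) := inferInstance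
    let q : ι' → LinearMap.ker ((D.obj T).d n (n+1)).hom := fun p => ⟨w p, LinearMap.mem_ker.mpr (hdw p)⟩
    have hq : ∑ p : ι', (p.1.1 : R) • q p = 0 := by
      apply Subtype.ext
      simpa using hsumw
    have hinj := Module.Flat.iff_rTensor_injective'.mp hPflat I
    have htP : ∑ p : ι', (p.1.1 : ↥I) ⊗ₜ[R] (q p)
        = (0 : ↥I ⊗[R] ↥(LinearMap.ker ((D.obj T).d n (n+1)).hom)) := by
      apply hinj
      rw [map_sum, map_zero]
      have hinjL : Function.Injective
          (TensorProduct.lid R ↥(LinearMap.ker ((D.obj T).d n (n+1)).hom)).toLinearMap :=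
        (TensorProduct.lid R ↥(LinearMap.ker ((D.obj T).d n (n+1)).hom)).injective
      apply hinjL
      rw [map_zero, map_sum]
      calc ∑ p : ι', (TensorProduct.lid R ↥(LinearMap.ker ((D.obj T).d n (n+1)).hom)).toLinearMap
            ((LinearMap.rTensor _ I.subtype) ((p.1.1 : ↥I) ⊗ₜ[R] q p))
          = ∑ p : ι', (p.1.1 : R) • q p :=
            Finset.sum_congr rfl (fun p _ => by
              rw [LinearMap.rTensor_tmul]
              exact TensorProduct.lid_tmul _ _)
        _ = 0 := hq
    -- the map from the stage kernel to the colimit kernel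
    let φ : ↥(LinearMap.ker ((D.obj T).d n (n+1)).hom) →ₗ[R]
        ↥(LinearMap.ker (c.pt.d n (n+1)).hom) :=
      LinearMap.codRestrict (LinearMap.ker (c.pt.d n (n+1)).hom)
        (((cn n).ι.app T).hom.comp
          (LinearMap.ker ((D.obj T).d n (n+1)).hom).subtype)
        (by
          intro p
          rw [LinearMap.mem_ker]
          show c.pt.d n (n+1) ((cn n).ι.app T (p : (D.obj T).X n)) = 0
          rw [hcomm n (n+1) T, LinearMap.mem_ker.mp p.2]; exact map_zero _)
    have hφq : ∀ p : ι', φ (q p) = p.1.2 := by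
      intro p
      apply Subtype.ext
      show (cn n).ι.app T (w p) = _
      exact hw p
    calc (∑ p ∈ s, p.1 ⊗ₜ[R] p.2 : ↥I ⊗[R] ↥(LinearMap.ker (c.pt.d n (n+1)).hom))
        = ∑ p : ι', p.1.1 ⊗ₜ[R] p.1.2 :=
          (Finset.sum_coe_sort s (fun p => p.1 ⊗ₜ[R] p.2)).symm
      _ = (LinearMap.lTensor ↥I φ) (∑ p : ι', (p.1.1 : ↥I) ⊗ₜ[R] q p) := by
          rw [map_sum]
          exact Finset.sum_congr rfl (fun p _ => by rw [LinearMap.lTensor_tmul, hφq p])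
      _ = 0 := by rw [htP, map_zero]

end Aux

theorem stmt_17 (R : Type) [CommRing R] (J : Type) [SmallCategory J] [IsFiltered J]
    (D : J ⥤ CochainComplex (ModuleCat R) ℤ) [Limits.HasColimit D]
    (hcontr : ∀ j : J, Nonempty (Homotopy (𝟙 (D.obj j)) 0))
    (hproj : ∀ (j : J) (i : ℤ), Module.Projective R ((D.obj j).X i))
    (Z : CochainComplex (ModuleCat R) ℤ) (hZ : Nonempty (Z ≅ Limits.colimit D)) :
    (∀ i : ℤ, Z.ExactAt i) ∧
      ∀ i : ℤ, Module.Flat R ↥(LinearMap.ker (Z.d i (i + 1)).hom) := by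
  obtain ⟨e⟩ := hZ
  let c : Cocone D :=
    { pt := Z
      ι :=
        { app := fun j => Limits.colimit.ι D j ≫ e.inv
          naturality := fun j k f => by simp } }
  have hc : IsColimit c :=
    (Limits.colimit.isColimit D).ofIsoColimit (Cocones.ext e.symm (fun j => rfl))
  haveI : IsFiltered (AsSmall J) := IsFiltered.of_equivalence AsSmall.equiv
  have := stmt17_aux (AsSmall.down ⋙ D) (fun j => hcontr _) (fun j i => hproj _ i)
    (c.whisker AsSmall.down) (hc.whiskerEquivalence AsSmall.equiv.symm)
  exact this
end
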